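/- arXiv:1503.01492 — 6 statements merged into one kernel-verified Lean document; each statement's English description precedes it below -/
import Mathlib

section
/- Let k be an algebraically closed field of characteristic p > 0. For every integer s with 2 ≤ s ≤ p−1, there is an isomorphism of representations of C_p over k: L_2 ⊗ L_s ≅ L_{s−1} ⊕ L_{s+1}. -/
/-- The nilpotent single Jordan block of size `s` (ones on the superdiagonal). -/
def jordanN (k : Type) [Field k] (s : ℕ) : Matrix (Fin s) (Fin s) k :=
  Matrix.of fun i j => if (i : ℕ) + 1 = (j : ℕ) then 1 else 0

/-- The generator `σ` of `C_p` acting on `L_s = k^s` as the unipotent Jordan block `1 + N`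
(i.e. multiplication by `1 + X` on `k[X]/(X^s)` in the basis `1, X, …, X^(s-1)`). -/
def sigmaL (k : Type) [Field k] (s : ℕ) : (Fin s → k) →ₗ[k] (Fin s → k) :=
  ((1 : Matrix (Fin s) (Fin s) k) + jordanN k s).mulVecLin

namespace Stmt2Aux
variable (k : Type) [Field k]

def Dv (n m : ℕ) : Fin n → k := fun i => if (i:ℕ) + 1 = m then 1 else 0

lemma Dv_zero (n : ℕ) : Dv k n 0 = 0 := by
  funext i; simp [Dv]

lemma Dv_gt {n m : ℕ} (h : n < m) : Dv k n m = 0 := by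
  funext i
  have : (i:ℕ) + 1 ≠ m := by have := i.isLt; omega
  simp [Dv, this]

lemma jordanN_mulVec_Dv {n m : ℕ} (h : m ≤ n) :
    (jordanN k n).mulVec (Dv k n m) = Dv k n (m-1) := by
  funext i
  simp only [Matrix.mulVec, dotProduct, jordanN, Dv, Matrix.of_apply,
    ite_mul, one_mul, zero_mul]
  rcases Nat.lt_or_ge ((i:ℕ)+1) n with hlt | hge
  · rw [Finset.sum_eq_single (⟨(i:ℕ)+1, hlt⟩ : Fin n)]
    · simp only [Fin.val_mk, if_pos rfl, if_true]
      exact if_congr (by omega) rfl rfl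
    · intro j _ hj
      rw [if_neg]
      intro hc
      exact hj (by ext; simp [← hc])
    · simp
  · rw [Finset.sum_eq_zero, eq_comm, if_neg]
    · have := i.isLt; omega
    · intro j _
      rw [if_neg]
      have := j.isLt; omega

lemma sigmaL_Dv {n m : ℕ} (h : m ≤ n) :
    sigmaL k n (Dv k n m) = Dv k n m + Dv k n (m-1) := by
  simp only [sigmaL, Matrix.mulVecLin_apply, Matrix.add_mulVec, Matrix.one_mulVec,
    jordanN_mulVec_Dv k h]

lemma basisFun_eq_Dv (n : ℕ) (t : Fin n) :
    (Pi.basisFun k (Fin n)) t = Dv k n ((t:ℕ)+1) := by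
  funext i
  simp [Pi.basisFun_apply, Dv, Pi.single_apply, Fin.ext_iff, eq_comm]

variable (s : ℕ)

abbrev T := TensorProduct k (Fin 2 → k) (Fin s → k)

noncomputable def P (m : ℕ) : T k s := Dv k 2 2 ⊗ₜ Dv k s m
noncomputable def Q (m : ℕ) : T k s := Dv k 2 1 ⊗ₜ Dv k s m
noncomputable def Tσ : T k s →ₗ[k] T k s := TensorProduct.map (sigmaL k 2) (sigmaL k s)

lemma P_zero : P k s 0 = 0 := by rw [P, Dv_zero, TensorProduct.tmul_zero]
lemma Q_zero : Q k s 0 = 0 := by rw [Q, Dv_zero, TensorProduct.tmul_zero]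
lemma Q_gt {m : ℕ} (h : s < m) : Q k s m = 0 := by
  rw [Q, Dv_gt k h, TensorProduct.tmul_zero]
lemma P_gt {m : ℕ} (h : s < m) : P k s m = 0 := by
  rw [P, Dv_gt k h, TensorProduct.tmul_zero]

lemma TσQ {m : ℕ} (h : m ≤ s) :
    Tσ k s (Q k s m) = Q k s m + Q k s (m-1) := by
  rw [Tσ, Q, TensorProduct.map_tmul, sigmaL_Dv k h, sigmaL_Dv k (by norm_num : 1 ≤ 2)]
  simp only [Nat.sub_self, Dv_zero, TensorProduct.tmul_add, TensorProduct.add_tmul,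
    TensorProduct.zero_tmul, Q]
  abel

lemma TσP {m : ℕ} (h : m ≤ s) :
    Tσ k s (P k s m) = P k s m + Q k s m + P k s (m-1) + Q k s (m-1) := by
  rw [Tσ, P, TensorProduct.map_tmul, sigmaL_Dv k h, sigmaL_Dv k (by norm_num : 2 ≤ 2)]
  simp only [TensorProduct.tmul_add, TensorProduct.add_tmul, P, Q]
  norm_num
  abel

def al : k := -((s:k) - 1)⁻¹

noncomputable def Vc (i : ℕ) : T k s :=
  P k s (s-i) + (i:k) • Q k s (s+1-i) + (i:k) • Q k s (s-i)

noncomputable def Wc (j : ℕ) : T k s :=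
  (1 + (j:k) * al k s) • Q k s (s-j) + al k s • P k s (s-1-j)
    + ((j:k) * al k s) • Q k s (s-1-j)

lemma hV (i : ℕ) : Tσ k s (Vc k s i) = Vc k s i + Vc k s (i+1) := by
  cases i with
  | zero =>
    have e1 : s + 1 - 1 = s := by omega
    simp only [Vc, Nat.cast_zero, zero_smul, add_zero, Nat.sub_zero, Nat.zero_add,
      Nat.cast_one, one_smul, e1]
    rw [TσP k s le_rfl]
    module
  | succ n =>
    have e1 : s - (n+1) - 1 = s - (n+2) := by omega
    have e2 : s + 1 - (n+1) - 1 = s - (n+1) := by omega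
    have e3 : s + 1 - (n+2) = s - (n+1) := by omega
    have e4 : s - (n+1+1) = s - (n+2) := by omega
    have e5 : s + 1 - (n+1+1) = s - (n+1) := by omega
    simp only [Vc]
    rw [map_add, map_add, map_smul, map_smul,
      TσP k s (by omega), TσQ k s (by omega), TσQ k s (by omega)]
    simp only [e1, e2, e3, e4, e5]
    push_cast
    module

lemma hW (j : ℕ) : Tσ k s (Wc k s j) = Wc k s j + Wc k s (j+1) := by
  have e1 : s - j - 1 = s - (j+1) := by omega
  have e2 : s - 1 - j = s - (j+1) := by omega
  have e3 : s - 1 - j - 1 = s - (j+2) := by omega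
  have e4 : s - 1 - (j+1) = s - (j+2) := by omega
  have e5 : s - (j+1) - 1 = s - (j+2) := by omega
  simp only [Wc]
  rw [map_add, map_add, map_smul, map_smul, map_smul,
    TσQ k s (by omega), TσP k s (by omega), TσQ k s (by omega)]
  simp only [e1, e2, e3, e4, e5]
  push_cast
  module


lemma Vc_top : Vc k s (s+1) = 0 := by
  have e1 : s - (s+1) = 0 := by omega
  have e2 : s + 1 - (s+1) = 0 := by omega
  simp only [Vc, e1, e2, P_zero, Q_zero, smul_zero, add_zero]

lemma rel {i : ℕ} (h1 : 1 ≤ i) :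
    (al k s - 1) • Q k s (s+1-i) =
      al k s • Vc k s i - Wc k s (i-1) - al k s • Q k s (s-i) := by
  have e1 : s - (i-1) = s + 1 - i := by omega
  have e2 : s - 1 - (i-1) = s - i := by omega
  have e3 : ((i-1 : ℕ) : k) = (i : k) - 1 := by
    push_cast [h1]; ring
  simp only [Vc, Wc, e1, e2, e3]
  module

lemma P_eq {i : ℕ} :
    P k s (s-i) = Vc k s i - (i:k) • Q k s (s+1-i) - (i:k) • Q k s (s-i) := by
  simp only [Vc]; module

/-- sum-of-coordinates linear map -/
noncomputable def Fmap (n : ℕ) (u : ℕ → T k s) : (Fin n → k) →ₗ[k] T k s :=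
  ∑ t : Fin n, LinearMap.smulRight (LinearMap.proj t) (u (t : ℕ))

lemma Fmap_apply (n : ℕ) (u : ℕ → T k s) (x : Fin n → k) :
    Fmap k s n u x = ∑ t : Fin n, x t • u (t : ℕ) := by
  simp [Fmap]

lemma Fmap_Dv0 (n : ℕ) (u : ℕ → T k s) : Fmap k s n u (Dv k n 0) = 0 := by
  rw [Dv_zero]; exact LinearMap.map_zero _

lemma Fmap_Dv (n : ℕ) (u : ℕ → T k s) {m : ℕ} (h1 : 1 ≤ m) (h2 : m ≤ n) :
    Fmap k s n u (Dv k n m) = u (m-1) := by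
  rw [Fmap_apply]
  rw [Finset.sum_eq_single (⟨m-1, by omega⟩ : Fin n)]
  · simp only [Dv, Fin.val_mk]
    rw [if_pos (by omega), one_smul]
  · intro t _ ht
    have : (t:ℕ) + 1 ≠ m := fun hc => ht (by ext; simp; omega)
    simp [Dv, this]
  · simp

lemma Fmap_basis (n : ℕ) (u : ℕ → T k s) (t : Fin n) :
    Fmap k s n u (Pi.basisFun k (Fin n) t) = u (t : ℕ) := by
  rw [basisFun_eq_Dv, Fmap_Dv k s n u (by omega) (by omega : (t:ℕ)+1 ≤ n)]
  simp

lemma Fmap_intertwine (n : ℕ) (u : ℕ → T k s)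
    (h0 : Tσ k s (u 0) = u 0)
    (hstep : ∀ t : ℕ, 1 ≤ t → t < n → Tσ k s (u t) = u t + u (t-1)) :
    (Fmap k s n u) ∘ₗ sigmaL k n = (Tσ k s) ∘ₗ (Fmap k s n u) := by
  apply (Pi.basisFun k (Fin n)).ext
  intro t
  simp only [LinearMap.coe_comp, Function.comp_apply]
  rw [basisFun_eq_Dv, sigmaL_Dv k (by omega : (t:ℕ)+1 ≤ n), map_add,
    Fmap_Dv k s n u (by omega) (by omega)]
  simp only [Nat.add_sub_cancel]
  rcases Nat.eq_zero_or_pos (t:ℕ) with h | h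
  · rw [h, Fmap_Dv0, add_zero, h0]
  · rw [Fmap_Dv k s n u h (by omega), hstep (t:ℕ) h t.isLt]



end Stmt2Aux


set_option maxHeartbeats 1000000 in
set_option synthInstance.maxHeartbeats 200000 in
/-- Over an algebraically closed field of characteristic `p > 0`,
for `2 ≤ s ≤ p − 1` there is an isomorphism of representations of `C_p`:
`L_2 ⊗ L_s ≅ L_{s−1} ⊕ L_{s+1}`, i.e. a `k`-linear equivalence intertwining the
(diagonal) action of `σ` on the tensor product with the direct-sum action. -/
theorem stmt2 (p : ℕ) (hp : p.Prime) (k : Type) [Field k] [IsAlgClosed k] [CharP k p]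
    (s : ℕ) (hs1 : 2 ≤ s) (hs2 : s ≤ p - 1) :
    ∃ e : TensorProduct k (Fin 2 → k) (Fin s → k) ≃ₗ[k]
        ((Fin (s - 1) → k) × (Fin (s + 1) → k)),
      ∀ x, e (TensorProduct.map (sigmaL k 2) (sigmaL k s) x) =
        (LinearMap.prodMap (sigmaL k (s - 1)) (sigmaL k (s + 1))) (e x) := by
  classical
  open Stmt2Aux in
  have hp2 := hp.two_le
  have hs0 : (s:k) ≠ 0 := by
    rw [Ne, CharP.cast_eq_zero_iff k p]
    intro hdvd
    have := Nat.le_of_dvd (by omega) hdvd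
    omega
  have hs' : ((s:k) - 1) ≠ 0 := by
    have h1 : ((s:k) - 1) = ((s-1 : ℕ) : k) := by
      push_cast [Nat.cast_sub (by omega : 1 ≤ s)]; ring
    rw [h1, Ne, CharP.cast_eq_zero_iff k p]
    intro hdvd
    have := Nat.le_of_dvd (by omega) hdvd
    omega
  have hal1 : al k s - 1 ≠ 0 := by
    intro h
    have hkey : ((s:k)-1) * (al k s - 1) = -(s:k) := by
      rw [al]
      field_simp
      ring
    rw [h, mul_zero] at hkey
    exact hs0 (neg_eq_zero.mp hkey.symm)
  have hWlast : Wc k s (s-1) = 0 := by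
    have e1 : s - (s-1) = 1 := by omega
    have e2 : s - 1 - (s-1) = 0 := by omega
    have e3 : ((s-1 : ℕ) : k) = (s:k) - 1 := by
      push_cast [Nat.cast_sub (by omega : 1 ≤ s)]; ring
    have e4 : 1 + ((s:k) - 1) * al k s = 0 := by
      rw [al, mul_neg, mul_inv_cancel₀ hs']; ring
    simp only [Wc, e1, e2, e3, e4, P_zero, Q_zero, smul_zero, zero_smul,
      add_zero, zero_add]
  set uW : ℕ → T k s := fun t => Wc k s (s-2-t) with huW
  set uV : ℕ → T k s := fun t => Vc k s (s-t) with huV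
  set FW := Fmap k s (s-1) uW with hFW
  set FV := Fmap k s (s+1) uV with hFV
  set F := FW.coprod FV with hF
  -- intertwining for the two pieces
  have hIW : FW ∘ₗ sigmaL k (s-1) = (Tσ k s) ∘ₗ FW := by
    apply Fmap_intertwine
    · show Tσ k s (Wc k s (s-2-0)) = Wc k s (s-2-0)
      rw [Nat.sub_zero, hW k s (s-2), (by omega : s-2+1 = s-1), hWlast, add_zero]
    · intro t ht1 ht2
      show Tσ k s (Wc k s (s-2-t)) = Wc k s (s-2-t) + Wc k s (s-2-(t-1))
      rw [hW k s (s-2-t), (by omega : s-2-t+1 = s-2-(t-1))]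
  have hIV : FV ∘ₗ sigmaL k (s+1) = (Tσ k s) ∘ₗ FV := by
    apply Fmap_intertwine
    · show Tσ k s (Vc k s (s-0)) = Vc k s (s-0)
      rw [Nat.sub_zero, hV k s s, (by omega : s+1 = s+1), Vc_top, add_zero]
    · intro t ht1 ht2
      show Tσ k s (Vc k s (s-t)) = Vc k s (s-t) + Vc k s (s-(t-1))
      rw [hV k s (s-t), (by omega : s-t+1 = s-(t-1))]
  have hFcomm : ∀ y, F ((LinearMap.prodMap (sigmaL k (s-1)) (sigmaL k (s+1))) y)
      = Tσ k s (F y) := by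
    rintro ⟨c, d⟩
    have h1 := LinearMap.congr_fun hIW c
    have h2 := LinearMap.congr_fun hIV d
    simp only [LinearMap.coe_comp, Function.comp_apply] at h1 h2
    simp only [hF, LinearMap.prodMap_apply, LinearMap.coprod_apply]
    rw [h1, h2, map_add]
  -- membership of generators in range
  have hWmem : ∀ j, j ≤ s-1 → Wc k s j ∈ LinearMap.range F := by
    intro j hj
    rcases Nat.lt_or_ge j (s-1) with h | h
    · refine ⟨(Pi.basisFun k (Fin (s-1)) ⟨s-2-j, by omega⟩, 0), ?_⟩
      simp only [hF, LinearMap.coprod_apply, LinearMap.map_zero, add_zero, hFW]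
      rw [Fmap_basis]
      show Wc k s (s-2-(s-2-j)) = Wc k s j
      rw [(by omega : s-2-(s-2-j) = j)]
    · rw [(by omega : j = s-1), hWlast]
      exact zero_mem _
  have hVmem : ∀ i, i ≤ s → Vc k s i ∈ LinearMap.range F := by
    intro i hi
    refine ⟨(0, Pi.basisFun k (Fin (s+1)) ⟨s-i, by omega⟩), ?_⟩
    simp only [hF, LinearMap.coprod_apply, LinearMap.map_zero, zero_add, hFV]
    rw [Fmap_basis]
    show Vc k s (s-(s-i)) = Vc k s i
    rw [(by omega : s-(s-i) = i)]
  have hQmem : ∀ m, m ≤ s → Q k s m ∈ LinearMap.range F := by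
    intro m
    induction m with
    | zero => intro _; rw [Q_zero]; exact zero_mem _
    | succ m ih =>
      intro hm
      have hrel := rel k s (i := s-m) (by omega)
      rw [(by omega : s+1-(s-m) = m+1), (by omega : s-(s-m) = m)] at hrel
      have hmem : (al k s - 1) • Q k s (m+1) ∈ LinearMap.range F := by
        rw [hrel]
        exact sub_mem (sub_mem (Submodule.smul_mem _ _ (hVmem (s-m) (by omega)))
          (hWmem (s-m-1) (by omega))) (Submodule.smul_mem _ _ (ih (by omega)))
      have := Submodule.smul_mem _ (al k s - 1)⁻¹ hmem
      rwa [smul_smul, inv_mul_cancel₀ hal1, one_smul] at this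
  have hQmem' : ∀ m, m ≤ s + 1 → Q k s m ∈ LinearMap.range F := by
    intro m hm
    rcases Nat.lt_or_ge m (s+1) with h | h
    · exact hQmem m (by omega)
    · rw [(by omega : m = s+1), Q_gt k s (by omega)]
      exact zero_mem _
  have hPmem : ∀ m, m ≤ s → P k s m ∈ LinearMap.range F := by
    intro m hm
    have := P_eq k s (i := s-m)
    rw [(by omega : s-(s-m) = m), (by omega : s+1-(s-m) = m+1)] at this
    rw [this]
    exact sub_mem (sub_mem (hVmem (s-m) (by omega))
      (Submodule.smul_mem _ _ (hQmem' (m+1) (by omega))))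
      (Submodule.smul_mem _ _ (hQmem' m (by omega)))
  -- surjectivity
  have hsurj : Function.Surjective F := by
    rw [← LinearMap.range_eq_top, ← top_le_iff,
      ← ((Pi.basisFun k (Fin 2)).tensorProduct (Pi.basisFun k (Fin s))).span_eq]
    rw [Submodule.span_le]
    rintro z ⟨⟨ε, j⟩, rfl⟩
    rw [Module.Basis.tensorProduct_apply, basisFun_eq_Dv, basisFun_eq_Dv]
    fin_cases ε
    · exact hQmem' ((j:ℕ)+1) (by omega)
    · show P k s ((j:ℕ)+1) ∈ _
      exact hPmem ((j:ℕ)+1) (by omega)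
  have hrank : Module.finrank k ((Fin (s-1) → k) × (Fin (s+1) → k))
      = Module.finrank k (T k s) := by
    rw [Module.finrank_prod, Module.finrank_tensorProduct]
    simp only [Module.finrank_fin_fun]
    omega
  have hinj : Function.Injective F :=
    (LinearMap.injective_iff_surjective_of_finrank_eq_finrank hrank).mpr hsurj
  have hbij : Function.Bijective F := ⟨hinj, hsurj⟩
  refine ⟨(LinearEquiv.ofBijective F hbij).symm, ?_⟩
  intro x
  rw [LinearEquiv.symm_apply_eq, LinearEquiv.ofBijective_apply, hFcomm]
  congr 1
  have := (LinearEquiv.ofBijective F hbij).apply_symm_apply x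
  rw [LinearEquiv.ofBijective_apply] at this
  exact this.symm
end

section
/- Let k be an algebraically closed field of characteristic p > 0. There is an isomorphism of representations of C_p over k: L_2 ⊗ L_p ≅ L_p ⊕ L_p. -/
lemma sigmaL_apply (k : Type) [Field k] (s : ℕ) (w : Fin s → k) (j : Fin s) :
    sigmaL k s w j = w j + if h : (j : ℕ) + 1 < s then w ⟨(j : ℕ) + 1, h⟩ else 0 := by
  unfold sigmaL jordanN
  simp only [Matrix.mulVecLin_apply, Matrix.add_mulVec, Matrix.one_mulVec, Pi.add_apply]
  congr 1
  simp only [Matrix.mulVec, dotProduct, Matrix.of_apply, ite_mul, one_mul, zero_mul]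
  rcases Nat.lt_or_ge ((j : ℕ) + 1) s with h | h
  · rw [dif_pos h]
    rw [Finset.sum_eq_single (⟨(j : ℕ) + 1, h⟩ : Fin s)]
    · simp
    · intro b _ hb
      rw [if_neg]
      intro hc
      exact hb (Fin.ext hc.symm)
    · simp
  · rw [dif_neg (by omega)]
    apply Finset.sum_eq_zero
    intro b _
    rw [if_neg]
    have := b.isLt
    omega

/-- The auxiliary "derivation-like" operator `A`, with `(A y)_j = (j+1) y_j + j y_{j-1}`. -/
def Amap (k : Type) [Field k] (p : ℕ) : (Fin p → k) →ₗ[k] (Fin p → k) where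
  toFun y := fun j => (((j : ℕ) : k) + 1) * y j +
    (if h : 0 < (j : ℕ) then ((j : ℕ) : k) *
      y ⟨(j : ℕ) - 1, lt_of_le_of_lt (Nat.sub_le _ _) j.isLt⟩ else 0)
  map_add' y z := by
    funext j
    by_cases h : 0 < (j : ℕ) <;> simp [h] <;> ring
  map_smul' c y := by
    funext j
    by_cases h : 0 < (j : ℕ) <;> simp [h, smul_eq_mul] <;> ring

lemma Amap_apply (k : Type) [Field k] (p : ℕ) (y : Fin p → k) (j : Fin p) :
    Amap k p y j = (((j : ℕ) : k) + 1) * y j +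
    (if h : 0 < (j : ℕ) then ((j : ℕ) : k) *
      y ⟨(j : ℕ) - 1, lt_of_le_of_lt (Nat.sub_le _ _) j.isLt⟩ else 0) := rfl

/-- The key commutation relation `σ ∘ A = A ∘ σ + σ`, valid in characteristic `p`. -/
lemma key_comm (p : ℕ) (hp : p.Prime) (k : Type) [Field k] [CharP k p]
    (w : Fin p → k) (j : Fin p) :
    sigmaL k p (Amap k p w) j = Amap k p (sigmaL k p w) j + sigmaL k p w j := by
  have hp2 : 2 ≤ p := hp.two_le
  have hj : (j : ℕ) < p := j.isLt
  by_cases h0 : 0 < (j : ℕ) <;> by_cases h1 : (j : ℕ) + 1 < p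
  · -- middle rows
    have e : (j : ℕ) - 1 + 1 = (j : ℕ) := by omega
    simp only [sigmaL_apply, Amap_apply, h0, h1, dif_pos, Nat.add_sub_cancel,
      Nat.succ_pos, Fin.eta, e, hj, dite_true]
    push_cast
    ring
  · -- bottom row: here characteristic p is needed
    have e : (j : ℕ) - 1 + 1 = (j : ℕ) := by omega
    simp only [sigmaL_apply, Amap_apply, h0, h1, dif_pos, dif_neg, Nat.add_sub_cancel,
      Nat.succ_pos, Fin.eta, e, hj, dite_true, dite_false, not_false_iff]
    have hpk : (((j : ℕ) : k) + 1) = 0 := by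
      have hjp : ((j : ℕ) + 1 : ℕ) = p := by omega
      have h := CharP.cast_eq_zero k p
      rw [← hjp] at h
      push_cast at h
      exact h
    linear_combination (-(w j)) * hpk
  · -- top row
    have ej : (((j : ℕ) : ℕ) : k) = 0 := by
      rw [(by omega : (j : ℕ) = 0)]; norm_num
    simp only [sigmaL_apply, Amap_apply, h0, h1, dif_pos, dif_neg, Nat.add_sub_cancel,
      Nat.succ_pos, Fin.eta, dite_true, dite_false, not_false_iff]
    push_cast
    simp only [ej]
    ring
  · -- p = 1 cannot happen
    omega

/-- Over an algebraically closed field of characteristic `p > 0`,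
there is an isomorphism of representations of `C_p`: `L_2 ⊗ L_p ≅ L_p ⊕ L_p`. -/
theorem stmt3 (p : ℕ) (hp : p.Prime) (k : Type) [Field k] [IsAlgClosed k] [CharP k p] :
    ∃ e : TensorProduct k (Fin 2 → k) (Fin p → k) ≃ₗ[k]
        ((Fin p → k) × (Fin p → k)),
      ∀ x, e (TensorProduct.map (sigmaL k 2) (sigmaL k p) x) =
        (LinearMap.prodMap (sigmaL k p) (sigmaL k p)) (e x) := by
  set A := Amap k p with hA
  have s00 : (Pi.single (0 : Fin 2) (1 : k) : Fin 2 → k) 0 = 1 := by simp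
  have s01 : (Pi.single (0 : Fin 2) (1 : k) : Fin 2 → k) 1 = 0 := by simp
  have s10 : (Pi.single (1 : Fin 2) (1 : k) : Fin 2 → k) 0 = 0 := by
    rw [Pi.single_eq_of_ne]; decide
  have s11 : (Pi.single (1 : Fin 2) (1 : k) : Fin 2 → k) 1 = 1 := by simp
  -- the bilinear map giving the forward direction
  set g : (Fin 2 → k) →ₗ[k] (Fin p → k) →ₗ[k] ((Fin p → k) × (Fin p → k)) :=
    LinearMap.mk₂ k (fun u w => (u 1 • w, u 0 • w + u 1 • A w))
      (fun u u' w => by simp [add_smul]; abel)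
      (fun c u w => by simp [smul_smul, smul_add])
      (fun u w w' => by simp [smul_add]; abel)
      (fun c u w => by simp [smul_smul, smul_add, mul_comm]) with hg
  set E : TensorProduct k (Fin 2 → k) (Fin p → k) →ₗ[k] ((Fin p → k) × (Fin p → k)) :=
    TensorProduct.lift g with hE
  set F : ((Fin p → k) × (Fin p → k)) →ₗ[k] TensorProduct k (Fin 2 → k) (Fin p → k) :=
    LinearMap.coprod
      ((TensorProduct.mk k (Fin 2 → k) (Fin p → k) (Pi.single (1 : Fin 2) (1 : k))) -
        (TensorProduct.mk k (Fin 2 → k) (Fin p → k) (Pi.single (0 : Fin 2) (1 : k))) ∘ₗ A)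
      (TensorProduct.mk k (Fin 2 → k) (Fin p → k) (Pi.single (0 : Fin 2) (1 : k))) with hF
  have h1 : E ∘ₗ F = LinearMap.id := by
    apply LinearMap.ext
    rintro ⟨y, z⟩
    simp [hE, hF, hg, TensorProduct.lift.tmul, s00, s01, s10, s11]
  have h2 : F ∘ₗ E = LinearMap.id := by
    apply TensorProduct.ext'
    intro u w
    have hu : u = u 0 • (Pi.single (0 : Fin 2) (1 : k) : Fin 2 → k) +
        u 1 • (Pi.single (1 : Fin 2) (1 : k) : Fin 2 → k) := by
      funext a
      fin_cases a <;> simp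
    simp only [LinearMap.comp_apply, hE, TensorProduct.lift.tmul, hg, LinearMap.mk₂_apply,
      hF, LinearMap.coprod_apply, LinearMap.sub_apply, TensorProduct.mk_apply,
      LinearMap.id_apply, map_smul, map_add]
    rw [smul_sub]
    conv_rhs => rw [hu, TensorProduct.add_tmul, ← TensorProduct.smul_tmul',
      ← TensorProduct.smul_tmul']
    module
  refine ⟨LinearEquiv.ofLinear E F h1 h2, ?_⟩
  have hH : E ∘ₗ (TensorProduct.map (sigmaL k 2) (sigmaL k p)) =
      (LinearMap.prodMap (sigmaL k p) (sigmaL k p)) ∘ₗ E := by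
    apply TensorProduct.ext'
    intro u w
    simp only [LinearMap.comp_apply, TensorProduct.map_tmul, hE, TensorProduct.lift.tmul,
      hg, LinearMap.mk₂_apply, LinearMap.prodMap_apply, Prod.map_apply]
    have hs1 : sigmaL k 2 u 1 = u 1 := by
      rw [sigmaL_apply]
      norm_num
    have hs0 : sigmaL k 2 u 0 = u 0 + u 1 := by
      rw [sigmaL_apply]
      norm_num
    have hAc : sigmaL k p (A w) = A (sigmaL k p w) + sigmaL k p w := by
      funext j
      exact key_comm p hp k w j
    refine Prod.ext ?_ ?_
    · simp [hs1]
    · simp only [hs0, hs1, map_add, map_smul]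
      rw [hAc]
      simp only [add_smul, smul_add]
      abel
  intro x
  have := LinearMap.congr_fun hH x
  simpa using this
end

section
/- Let k be an algebraically closed field of characteristic p > 3. For every integer s with 2 ≤ s ≤ p−2, the representation L_3 is a direct summand of L_s ⊗ L_s: there exists a representation R of C_p over k with L_s ⊗ L_s ≅ L_3 ⊕ R. -/
namespace Stmt6

variable (k : Type) [Field k] (s : ℕ)

/-- Indicator vector of coordinate `a` (zero when `a ≥ s`). -/
def sN (a : ℕ) : Fin s → k := fun i => if (i : ℕ) = a then 1 else 0

/-- Coordinate extraction with out-of-range giving `0`. -/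
def coord (x : Fin s → k) (a : ℕ) : k := if h : a < s then x ⟨a, h⟩ else 0

variable {k s}

lemma coord_of_lt (x : Fin s → k) {a : ℕ} (h : a < s) : coord k s x a = x ⟨a, h⟩ := dif_pos h

lemma coord_of_ge (x : Fin s → k) {a : ℕ} (h : s ≤ a) : coord k s x a = 0 :=
  dif_neg (not_lt.mpr h)

lemma coord_add (x y : Fin s → k) (a : ℕ) :
    coord k s (x + y) a = coord k s x a + coord k s y a := by
  unfold coord; split <;> simp

lemma coord_smul (c : k) (x : Fin s → k) (a : ℕ) :
    coord k s (c • x) a = c * coord k s x a := by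
  unfold coord; split <;> simp

lemma sN_eq_single {a : ℕ} (h : a < s) : sN k s a = Pi.single (⟨a, h⟩ : Fin s) (1 : k) := by
  funext i
  simp [sN, Pi.single_apply, Fin.ext_iff]

lemma coord_sN_self {c : ℕ} (h : c < s) : coord k s (sN k s c) c = 1 := by
  rw [coord_of_lt _ h]; simp [sN]

lemma coord_sN_ne {a c : ℕ} (h : a ≠ c) : coord k s (sN k s c) a = 0 := by
  unfold coord sN
  split
  · simp [h]
  · rfl

lemma jordan_mulVec (x : Fin s → k) (i : Fin s) :
    (jordanN k s).mulVecLin x i = coord k s x ((i : ℕ) + 1) := by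
  simp only [Matrix.mulVecLin_apply, Matrix.mulVec, dotProduct, jordanN, Matrix.of_apply]
  by_cases h : (i : ℕ) + 1 < s
  · rw [coord_of_lt x h, Finset.sum_eq_single (⟨(i : ℕ) + 1, h⟩ : Fin s)]
    · simp
    · intro j _ hj
      rw [if_neg, zero_mul]
      intro hc; exact hj (Fin.ext hc.symm)
    · intro hmem; exact absurd (Finset.mem_univ _) hmem
  · rw [coord_of_ge x (not_lt.mp h), Finset.sum_eq_zero]
    intro j _
    rw [if_neg, zero_mul]
    have := j.isLt; omega

lemma coord_jordan (x : Fin s → k) (a : ℕ) :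
    coord k s ((jordanN k s).mulVecLin x) a = coord k s x (a + 1) := by
  by_cases h : a < s
  · rw [coord_of_lt _ h, jordan_mulVec]
  · rw [coord_of_ge _ (not_lt.mp h), coord_of_ge x (by omega)]

lemma jordan_sN_zero : (jordanN k s).mulVecLin (sN k s 0) = 0 := by
  funext i
  rw [jordan_mulVec]
  rw [coord_sN_ne (by omega)]
  rfl

lemma jordan_sN_succ {a : ℕ} (h : a + 1 < s) :
    (jordanN k s).mulVecLin (sN k s (a + 1)) = sN k s a := by
  funext i
  rw [jordan_mulVec]
  by_cases hia : (i : ℕ) = a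
  · rw [hia, coord_sN_self h]
    simp [sN, hia]
  · rw [coord_sN_ne (by omega)]
    simp [sN, hia]

lemma sigma_apply (x : Fin s → k) :
    sigmaL k s x = x + (jordanN k s).mulVecLin x := by
  simp [sigmaL, Matrix.mulVecLin_apply, Matrix.add_mulVec, Matrix.one_mulVec]

variable (k s)

/-- The unipotent Jordan block matrix. -/
def Amat : Matrix (Fin s) (Fin s) k := 1 + jordanN k s

variable {k s}

lemma sigmaL_eq : sigmaL k s = (Amat k s).mulVecLin := rfl

lemma jordan_pow_apply (m : ℕ) (i j : Fin s) :
    ((jordanN k s) ^ m) i j = if (i : ℕ) + m = (j : ℕ) then 1 else 0 := by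
  induction m generalizing j with
  | zero => simp [Matrix.one_apply, Fin.ext_iff]
  | succ m ih =>
    rw [pow_succ, Matrix.mul_apply]
    by_cases h : (i : ℕ) + m < s
    · rw [Finset.sum_eq_single (⟨(i : ℕ) + m, h⟩ : Fin s)]
      · rw [ih]
        have hiff : ((i : ℕ) + m + 1 = (j : ℕ)) ↔ ((i : ℕ) + (m + 1) = (j : ℕ)) := by omega
        simp [jordanN, hiff]
      · intro t _ ht
        rw [ih, if_neg, zero_mul]
        intro hc; exact ht (Fin.ext hc.symm)
      · intro hmem; exact absurd (Finset.mem_univ _) hmem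
    · rw [if_neg (by have := j.isLt; omega)]
      apply Finset.sum_eq_zero
      intro t _
      rw [ih, if_neg (by have := t.isLt; omega), zero_mul]

lemma jordan_pow_s : (jordanN k s) ^ s = 0 := by
  ext i j
  rw [jordan_pow_apply]
  rw [if_neg (by have := j.isLt; omega)]
  rfl

variable (k s) in
/-- Explicit inverse of `Amat`. -/
def Ainv : Matrix (Fin s) (Fin s) k := ∑ m ∈ Finset.range s, (-(jordanN k s)) ^ m

lemma Ainv_mul_Amat : (Ainv k s) * (Amat k s) = 1 := by
  have h := geom_sum_mul (-(jordanN k s)) s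
  rw [neg_pow, jordan_pow_s, mul_zero, zero_sub] at h
  have h2 : -(jordanN k s) - 1 = -(Amat k s) := by unfold Amat; abel
  rw [h2, mul_neg] at h
  exact neg_injective h

lemma Amat_mul_Ainv : (Amat k s) * (Ainv k s) = 1 :=
  mul_eq_one_comm.mp Ainv_mul_Amat

lemma Ainv_pow_mul (m : ℕ) : (Ainv k s) ^ m * (Amat k s) ^ m = 1 := by
  have hc : Commute (Ainv k s) (Amat k s) := by
    unfold Commute SemiconjBy
    rw [Ainv_mul_Amat, Amat_mul_Ainv]
  rw [← hc.mul_pow, Ainv_mul_Amat, one_pow]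


section Psi

variable {k : Type} [Field k] {s : ℕ}

variable (k s) in
/-- Projection onto coordinate `b` composed with inclusion. -/
def Pproj (b : Fin s) : (Fin s → k) →ₗ[k] (Fin s → k) :=
  (LinearMap.proj b).smulRight (Pi.single b 1)

variable (k s) in
/-- The intertwiner `ψ(x ⊗ e_b) = A^(s-1-b) x ⊗ e_b`. -/
noncomputable def psiMap : TensorProduct k (Fin s → k) (Fin s → k) →ₗ[k]
    TensorProduct k (Fin s → k) (Fin s → k) :=
  ∑ b : Fin s, TensorProduct.map ((Amat k s ^ (s - 1 - (b : ℕ)))).mulVecLin (Pproj k s b)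

variable (k s) in
noncomputable def psiInv : TensorProduct k (Fin s → k) (Fin s → k) →ₗ[k]
    TensorProduct k (Fin s → k) (Fin s → k) :=
  ∑ b : Fin s, TensorProduct.map ((Ainv k s ^ (s - 1 - (b : ℕ)))).mulVecLin (Pproj k s b)

lemma Pproj_sN {b : Fin s} {c : ℕ} (hc : c < s) :
    Pproj k s b (sN k s c) = if (b : ℕ) = c then sN k s c else 0 := by
  simp only [Pproj, LinearMap.smulRight_apply, LinearMap.proj_apply]
  by_cases h : (b : ℕ) = c
  · rw [if_pos h]
    have hb : b = ⟨c, hc⟩ := Fin.ext h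
    rw [hb]
    have h1 : sN k s c (⟨c, hc⟩ : Fin s) = 1 := by simp [sN]
    rw [h1, one_smul, sN_eq_single hc]
  · rw [if_neg h]
    have h1 : sN k s c b = 0 := by simp [sN, h]
    rw [h1, zero_smul]

lemma psi_tmul (x : Fin s → k) {c : ℕ} (hc : c < s) :
    psiMap k s (x ⊗ₜ sN k s c) = ((Amat k s ^ (s - 1 - c)).mulVecLin x) ⊗ₜ sN k s c := by
  simp only [psiMap, LinearMap.sum_apply, TensorProduct.map_tmul]
  rw [Finset.sum_eq_single (⟨c, hc⟩ : Fin s)]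
  · rw [Pproj_sN hc, if_pos rfl]
  · intro b _ hb
    rw [Pproj_sN hc, if_neg (fun hcc => hb (Fin.ext hcc)), TensorProduct.tmul_zero]
  · intro hmem; exact absurd (Finset.mem_univ _) hmem

lemma psiInv_tmul (x : Fin s → k) {c : ℕ} (hc : c < s) :
    psiInv k s (x ⊗ₜ sN k s c) = ((Ainv k s ^ (s - 1 - c)).mulVecLin x) ⊗ₜ sN k s c := by
  simp only [psiInv, LinearMap.sum_apply, TensorProduct.map_tmul]
  rw [Finset.sum_eq_single (⟨c, hc⟩ : Fin s)]
  · rw [Pproj_sN hc, if_pos rfl]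
  · intro b _ hb
    rw [Pproj_sN hc, if_neg (fun hcc => hb (Fin.ext hcc)), TensorProduct.tmul_zero]
  · intro hmem; exact absurd (Finset.mem_univ _) hmem

/-- The tensor basis. -/
noncomputable def tB (k : Type) [Field k] (s : ℕ) :
    Module.Basis (Fin s × Fin s) k (TensorProduct k (Fin s → k) (Fin s → k)) :=
  (Pi.basisFun k (Fin s)).tensorProduct (Pi.basisFun k (Fin s))

lemma tB_apply (a b : Fin s) :
    tB k s (a, b) = sN k s (a : ℕ) ⊗ₜ sN k s (b : ℕ) := by
  rw [tB, Module.Basis.tensorProduct_apply]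
  rw [sN_eq_single a.isLt, sN_eq_single b.isLt]
  congr 1 <;> [skip; congr 1] <;>
    simp [Pi.basisFun_apply]

lemma psiInv_comp_psi : psiInv k s ∘ₗ psiMap k s = LinearMap.id := by
  apply Module.Basis.ext (tB k s)
  rintro ⟨a, b⟩
  rw [tB_apply]
  rw [LinearMap.comp_apply, psi_tmul _ b.isLt, psiInv_tmul _ b.isLt]
  have hv : ∀ v : Fin s → k,
      (Ainv k s ^ (s - 1 - (b : ℕ))).mulVecLin ((Amat k s ^ (s - 1 - (b : ℕ))).mulVecLin v) = v := by
    intro v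
    rw [← LinearMap.comp_apply, ← Matrix.mulVecLin_mul, Ainv_pow_mul, Matrix.mulVecLin_one]
    rfl
  rw [hv]
  rfl

lemma psi_comp_psiInv : psiMap k s ∘ₗ psiInv k s = LinearMap.id := by
  apply Module.Basis.ext (tB k s)
  rintro ⟨a, b⟩
  rw [tB_apply]
  rw [LinearMap.comp_apply, psiInv_tmul _ b.isLt, psi_tmul _ b.isLt]
  have hcom : Commute (Ainv k s) (Amat k s) := by
    unfold Commute SemiconjBy
    rw [Ainv_mul_Amat, Amat_mul_Ainv]
  have hmm : (Amat k s) ^ (s - 1 - (b:ℕ)) * (Ainv k s) ^ (s - 1 - (b:ℕ)) = 1 := by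
    rw [← hcom.symm.mul_pow, Amat_mul_Ainv, one_pow]
  have hv : ∀ v : Fin s → k,
      (Amat k s ^ (s - 1 - (b : ℕ))).mulVecLin ((Ainv k s ^ (s - 1 - (b : ℕ))).mulVecLin v) = v := by
    intro v
    rw [← LinearMap.comp_apply, ← Matrix.mulVecLin_mul, hmm, Matrix.mulVecLin_one]
    rfl
  rw [hv]
  rfl

variable (k s) in
/-- Multiplication by `x + z` plus identity, in the auxiliary model. -/
noncomputable def Uhat : TensorProduct k (Fin s → k) (Fin s → k) →ₗ[k]
    TensorProduct k (Fin s → k) (Fin s → k) :=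
  LinearMap.id + (TensorProduct.map (jordanN k s).mulVecLin LinearMap.id
    + TensorProduct.map LinearMap.id (jordanN k s).mulVecLin)

variable (k s) in
noncomputable def Tmap : TensorProduct k (Fin s → k) (Fin s → k) →ₗ[k]
    TensorProduct k (Fin s → k) (Fin s → k) :=
  TensorProduct.map (sigmaL k s) (sigmaL k s)

lemma sigma_pow_step (m : ℕ) (x : Fin s → k) :
    sigmaL k s ((Amat k s ^ m).mulVecLin x) = (Amat k s ^ (m + 1)).mulVecLin x := by
  rw [sigmaL_eq, pow_succ', Matrix.mulVecLin_mul]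
  rfl

lemma pow_step_sigma (m : ℕ) (x : Fin s → k) :
    (Amat k s ^ m).mulVecLin (sigmaL k s x) = (Amat k s ^ (m + 1)).mulVecLin x := by
  rw [sigmaL_eq, pow_succ, Matrix.mulVecLin_mul]
  rfl

lemma T_comp_psi : Tmap k s ∘ₗ psiMap k s = psiMap k s ∘ₗ Uhat k s := by
  apply Module.Basis.ext (tB k s)
  rintro ⟨a, b⟩
  rw [tB_apply]
  set x : Fin s → k := sN k s (a : ℕ) with hx
  have hbs : (b : ℕ) < s := b.isLt
  have hUh : Uhat k s (x ⊗ₜ sN k s (b : ℕ)) =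
      (sigmaL k s x) ⊗ₜ sN k s (b : ℕ)
        + x ⊗ₜ ((jordanN k s).mulVecLin (sN k s (b : ℕ))) := by
    simp only [Uhat, LinearMap.add_apply, LinearMap.id_apply, TensorProduct.map_tmul,
      LinearMap.id_coe, id_eq]
    rw [sigma_apply, TensorProduct.add_tmul]
    abel
  rw [LinearMap.comp_apply, LinearMap.comp_apply, hUh, psi_tmul _ hbs]
  rw [map_add, psi_tmul _ hbs]
  rcases Nat.eq_zero_or_pos (b : ℕ) with hb0 | hbpos
  · rw [hb0, jordan_sN_zero, TensorProduct.tmul_zero, map_zero, add_zero]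
    simp only [Tmap, TensorProduct.map_tmul]
    rw [sigma_pow_step, pow_step_sigma]
    rw [sigma_apply (sN k s 0), jordan_sN_zero, add_zero]
  · obtain ⟨c, hc⟩ : ∃ c, (b : ℕ) = c + 1 := ⟨(b : ℕ) - 1, by omega⟩
    have hc1 : c + 1 < s := by omega
    rw [hc, jordan_sN_succ hc1]
    have hcs : c < s := by omega
    rw [psi_tmul _ hcs]
    simp only [Tmap, TensorProduct.map_tmul]
    rw [sigma_pow_step, pow_step_sigma]
    rw [sigma_apply (sN k s (c+1)), jordan_sN_succ hc1, TensorProduct.tmul_add]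
    have he : s - 1 - (c + 1) + 1 = s - 1 - c := by omega
    rw [he]

lemma psiInv_comp_T : psiInv k s ∘ₗ Tmap k s = Uhat k s ∘ₗ psiInv k s := by
  have h1 : psiInv k s ∘ₗ Tmap k s ∘ₗ psiMap k s ∘ₗ psiInv k s
      = psiInv k s ∘ₗ Tmap k s := by
    rw [psi_comp_psiInv]
    rfl
  rw [← h1]
  have h2 : Tmap k s ∘ₗ psiMap k s ∘ₗ psiInv k s
      = (psiMap k s ∘ₗ Uhat k s) ∘ₗ psiInv k s := by
    rw [← LinearMap.comp_assoc, T_comp_psi]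
  rw [h2]
  rw [← LinearMap.comp_assoc, ← LinearMap.comp_assoc, psiInv_comp_psi]
  rfl

end Psi


section Chains

variable {k : Type} [Field k] {s : ℕ}

lemma shift_sum {M : Type} [AddCommMonoid M] (m : ℕ) (f : ℕ → M) (h0 : f 0 = 0) :
    ∑ a ∈ Finset.range (m + 1), f a = ∑ a ∈ Finset.range m, f (a + 1) := by
  rw [Finset.sum_range_succ' f m, h0, add_zero]

lemma extend_sum {M : Type} [AddCommMonoid M] (m : ℕ) (f : ℕ → M) (hm : f m = 0) :
    ∑ a ∈ Finset.range m, f a = ∑ a ∈ Finset.range (m + 1), f a := by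
  rw [Finset.sum_range_succ, hm, add_zero]

variable (k s) in
/-- Element of the tensor square with coefficient matrix `W`. -/
noncomputable def wh (W : ℕ → ℕ → k) : TensorProduct k (Fin s → k) (Fin s → k) :=
  ∑ a ∈ Finset.range s, ∑ b ∈ Finset.range s, W a b • (sN k s a ⊗ₜ[k] sN k s b)

lemma wh_add (f g : ℕ → ℕ → k) :
    wh k s (fun a b => f a b + g a b) = wh k s f + wh k s g := by
  unfold wh
  rw [← Finset.sum_add_distrib]
  apply Finset.sum_congr rfl
  intro a _
  rw [← Finset.sum_add_distrib]
  apply Finset.sum_congr rfl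
  intro b _
  rw [add_smul]

lemma mapN_left_wh (hs : 0 < s) (W : ℕ → ℕ → k) (hW : ∀ b, W s b = 0) :
    TensorProduct.map (jordanN k s).mulVecLin LinearMap.id (wh k s W) =
      wh k s (fun a b => W (a + 1) b) := by
  obtain ⟨m, rfl⟩ : ∃ m, s = m + 1 := ⟨s - 1, by omega⟩
  unfold wh
  rw [map_sum]
  simp only [map_sum, map_smul, TensorProduct.map_tmul, LinearMap.id_coe, id_eq]
  rw [shift_sum m _ (by rw [jordan_sN_zero]; simp)]
  calc ∑ a ∈ Finset.range m, ∑ b ∈ Finset.range (m+1),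
        W (a+1) b • ((jordanN k (m+1)).mulVecLin (sN k (m+1) (a+1)) ⊗ₜ[k] sN k (m+1) b)
      = ∑ a ∈ Finset.range m, ∑ b ∈ Finset.range (m+1),
        W (a+1) b • (sN k (m+1) a ⊗ₜ[k] sN k (m+1) b) := by
        apply Finset.sum_congr rfl
        intro a ha
        apply Finset.sum_congr rfl
        intro b _
        rw [jordan_sN_succ (by have := Finset.mem_range.mp ha; omega)]
    _ = ∑ a ∈ Finset.range (m+1), ∑ b ∈ Finset.range (m+1),
        W (a+1) b • (sN k (m+1) a ⊗ₜ[k] sN k (m+1) b) := by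
        apply extend_sum
        apply Finset.sum_eq_zero
        intro b _
        rw [hW b, zero_smul]

lemma mapN_right_wh (hs : 0 < s) (W : ℕ → ℕ → k) (hW : ∀ a, W a s = 0) :
    TensorProduct.map LinearMap.id (jordanN k s).mulVecLin (wh k s W) =
      wh k s (fun a b => W a (b + 1)) := by
  obtain ⟨m, rfl⟩ : ∃ m, s = m + 1 := ⟨s - 1, by omega⟩
  unfold wh
  rw [map_sum]
  simp only [map_sum, map_smul, TensorProduct.map_tmul, LinearMap.id_coe, id_eq]
  apply Finset.sum_congr rfl
  intro a _
  rw [shift_sum m _ (by rw [jordan_sN_zero]; simp)]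
  calc ∑ b ∈ Finset.range m,
        W a (b+1) • (sN k (m+1) a ⊗ₜ[k] (jordanN k (m+1)).mulVecLin (sN k (m+1) (b+1)))
      = ∑ b ∈ Finset.range m, W a (b+1) • (sN k (m+1) a ⊗ₜ[k] sN k (m+1) b) := by
        apply Finset.sum_congr rfl
        intro b hb
        rw [jordan_sN_succ (by have := Finset.mem_range.mp hb; omega)]
    _ = ∑ b ∈ Finset.range (m+1), W a (b+1) • (sN k (m+1) a ⊗ₜ[k] sN k (m+1) b) := by
        apply extend_sum
        rw [hW a, zero_smul]

lemma Uhat_wh (hs : 0 < s) (W W' : ℕ → ℕ → k) (hWl : ∀ b, W s b = 0) (hWr : ∀ a, W a s = 0)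
    (hstep : ∀ a b, W (a + 1) b + W a (b + 1) = W' a b) :
    Uhat k s (wh k s W) = wh k s W + wh k s W' := by
  have h : (fun a b => W (a+1) b + W a (b+1)) = W' := by
    funext a b; exact hstep a b
  unfold Uhat
  simp only [LinearMap.add_apply, LinearMap.id_apply]
  rw [mapN_left_wh hs W hWl, mapN_right_wh hs W hWr, ← wh_add, h]

end Chains

section Functionals

variable {k : Type} [Field k] {s : ℕ}

variable (k s) in
noncomputable def coordL (a : ℕ) : (Fin s → k) →ₗ[k] k where
  toFun x := coord k s x a
  map_add' x y := coord_add x y a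
  map_smul' c x := by simpa using coord_smul c x a

@[simp] lemma coordL_apply (a : ℕ) (x : Fin s → k) : coordL k s a x = coord k s x a := rfl

variable (k s) in
noncomputable def Bform (G : ℕ → ℕ → k) :
    (Fin s → k) →ₗ[k] (Fin s → k) →ₗ[k] k :=
  ∑ a ∈ Finset.range s, ∑ b ∈ Finset.range s,
    G a b • (LinearMap.mul k k).compl₁₂ (coordL k s a) (coordL k s b)

lemma Bform_apply (G : ℕ → ℕ → k) (x y : Fin s → k) :
    Bform k s G x y = ∑ a ∈ Finset.range s, ∑ b ∈ Finset.range s,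
      G a b * (coord k s x a * coord k s y b) := by
  unfold Bform
  simp only [LinearMap.coe_sum, Finset.sum_apply, LinearMap.smul_apply,
    LinearMap.compl₁₂_apply, LinearMap.mul_apply', coordL_apply, smul_eq_mul]

variable (k s) in
noncomputable def fF (G : ℕ → ℕ → k) :
    TensorProduct k (Fin s → k) (Fin s → k) →ₗ[k] k :=
  TensorProduct.lift (Bform k s G)

lemma fF_tmul (G : ℕ → ℕ → k) (x y : Fin s → k) :
    fF k s G (x ⊗ₜ y) = ∑ a ∈ Finset.range s, ∑ b ∈ Finset.range s,
      G a b * (coord k s x a * coord k s y b) := by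
  rw [fF, TensorProduct.lift.tmul, Bform_apply]

lemma fF_sN (G : ℕ → ℕ → k) {a b : ℕ} (ha : a < s) (hb : b < s) :
    fF k s G (sN k s a ⊗ₜ sN k s b) = G a b := by
  rw [fF_tmul]
  rw [Finset.sum_eq_single a]
  · rw [Finset.sum_eq_single b]
    · rw [coord_sN_self ha, coord_sN_self hb]; ring
    · intro b' _ hbne
      rw [coord_sN_ne hbne, mul_zero, mul_zero]
    · intro h; exact absurd (Finset.mem_range.mpr hb) h
  · intro a' _ hane
    apply Finset.sum_eq_zero
    intro b' _
    rw [coord_sN_ne hane, zero_mul, mul_zero]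
  · intro h; exact absurd (Finset.mem_range.mpr ha) h

lemma fF_zero : fF k s (fun _ _ => (0 : k)) = 0 := by
  apply TensorProduct.ext'
  intro x y
  rw [fF_tmul]
  simp

lemma fF_wh (G W : ℕ → ℕ → k) :
    fF k s G (wh k s W) =
      ∑ a ∈ Finset.range s, ∑ b ∈ Finset.range s, W a b * G a b := by
  unfold wh
  rw [map_sum]
  apply Finset.sum_congr rfl
  intro a ha
  rw [map_sum]
  apply Finset.sum_congr rfl
  intro b hb
  rw [map_smul, fF_sN G (Finset.mem_range.mp ha) (Finset.mem_range.mp hb), smul_eq_mul]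

lemma fF_comp_maps (hs : 0 < s) (G G' : ℕ → ℕ → k)
    (hyp : ∀ a b, a < s → b < s →
      (if a = 0 then 0 else G (a - 1) b) + (if b = 0 then 0 else G a (b - 1)) = G' a b) :
    (fF k s G) ∘ₗ (TensorProduct.map (jordanN k s).mulVecLin LinearMap.id
      + TensorProduct.map LinearMap.id (jordanN k s).mulVecLin) = fF k s G' := by
  obtain ⟨m, rfl⟩ : ∃ m, s = m + 1 := ⟨s - 1, by omega⟩
  apply TensorProduct.ext'
  intro x y
  simp only [LinearMap.comp_apply, LinearMap.add_apply, TensorProduct.map_tmul,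
    LinearMap.id_coe, id_eq, map_add]
  rw [fF_tmul, fF_tmul, fF_tmul]
  have key1 : ∑ a ∈ Finset.range (m+1), ∑ b ∈ Finset.range (m+1),
        G a b * (coord k (m+1) ((jordanN k (m+1)).mulVecLin x) a * coord k (m+1) y b)
      = ∑ a ∈ Finset.range (m+1), ∑ b ∈ Finset.range (m+1),
        (if a = 0 then 0 else G (a-1) b) * (coord k (m+1) x a * coord k (m+1) y b) := by
    have e1 : ∑ a ∈ Finset.range (m+1), ∑ b ∈ Finset.range (m+1),
          G a b * (coord k (m+1) ((jordanN k (m+1)).mulVecLin x) a * coord k (m+1) y b)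
        = ∑ a ∈ Finset.range (m+1), ∑ b ∈ Finset.range (m+1),
          G a b * (coord k (m+1) x (a+1) * coord k (m+1) y b) := by
      apply Finset.sum_congr rfl
      intro a _
      apply Finset.sum_congr rfl
      intro b _
      rw [coord_jordan]
    rw [e1]
    rw [Finset.sum_range_succ]
    have hm0 : ∑ b ∈ Finset.range (m+1),
        G m b * (coord k (m+1) x (m+1) * coord k (m+1) y b) = 0 := by
      apply Finset.sum_eq_zero
      intro b _
      rw [coord_of_ge x (by omega), zero_mul, mul_zero]
    rw [hm0, add_zero]
    rw [shift_sum m (fun a => ∑ b ∈ Finset.range (m+1),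
      (if a = 0 then 0 else G (a-1) b) * (coord k (m+1) x a * coord k (m+1) y b))
      (by simp)]
    apply Finset.sum_congr rfl
    intro a _
    apply Finset.sum_congr rfl
    intro b _
    rw [if_neg (Nat.succ_ne_zero a), Nat.add_sub_cancel]
  have key2 : ∑ a ∈ Finset.range (m+1), ∑ b ∈ Finset.range (m+1),
        G a b * (coord k (m+1) x a * coord k (m+1) ((jordanN k (m+1)).mulVecLin y) b)
      = ∑ a ∈ Finset.range (m+1), ∑ b ∈ Finset.range (m+1),
        (if b = 0 then 0 else G a (b-1)) * (coord k (m+1) x a * coord k (m+1) y b) := by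
    apply Finset.sum_congr rfl
    intro a _
    have e1 : ∑ b ∈ Finset.range (m+1),
          G a b * (coord k (m+1) x a * coord k (m+1) ((jordanN k (m+1)).mulVecLin y) b)
        = ∑ b ∈ Finset.range (m+1),
          G a b * (coord k (m+1) x a * coord k (m+1) y (b+1)) := by
      apply Finset.sum_congr rfl
      intro b _
      rw [coord_jordan]
    rw [e1]
    rw [Finset.sum_range_succ]
    rw [coord_of_ge y (by omega), mul_zero, mul_zero, add_zero]
    rw [shift_sum m (fun b =>
      (if b = 0 then 0 else G a (b-1)) * (coord k (m+1) x a * coord k (m+1) y b))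
      (by simp)]
    apply Finset.sum_congr rfl
    intro b _
    rw [if_neg (Nat.succ_ne_zero b), Nat.add_sub_cancel]
  rw [key1, key2, ← Finset.sum_add_distrib]
  apply Finset.sum_congr rfl
  intro a ha
  rw [← Finset.sum_add_distrib]
  apply Finset.sum_congr rfl
  intro b hb
  rw [← add_mul, hyp a b (Finset.mem_range.mp ha) (Finset.mem_range.mp hb)]

lemma fF_comp_Uhat (hs : 0 < s) (G G' : ℕ → ℕ → k)
    (hyp : ∀ a b, a < s → b < s →
      (if a = 0 then 0 else G (a - 1) b) + (if b = 0 then 0 else G a (b - 1)) = G' a b) :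
    (fF k s G) ∘ₗ Uhat k s = fF k s G + fF k s G' := by
  unfold Uhat
  rw [LinearMap.comp_add]
  rw [LinearMap.comp_id]
  rw [fF_comp_maps hs G G' hyp]

end Functionals


section Concrete

variable {k : Type} [Field k] {s : ℕ}

variable (k s) in
def W2f (a b : ℕ) : k := if a + b = s then (-1 : k) ^ b * (a : k) * (b : k) else 0
variable (k s) in
def W1f (a b : ℕ) : k := if a + b + 1 = s then (-1 : k) ^ b * ((b : k) - (a : k)) else 0
variable (k s) in
def W0f (a b : ℕ) : k := if a + b + 2 = s then -2 * (-1 : k) ^ b else 0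
variable (k s) in
def G0f (a b : ℕ) : k := if a + b + 2 = s then (-1 : k) ^ (a + 1) * ((a : k) + 1) * ((b : k) + 1) else 0
variable (k s) in
def G1f (a b : ℕ) : k := if a + b + 1 = s then (-1 : k) ^ a * ((a : k) - (b : k)) else 0
variable (k s) in
def G2f (a b : ℕ) : k := if a + b = s then 2 * (-1 : k) ^ a else 0

lemma step21 (a b : ℕ) : W2f k s (a+1) b + W2f k s a (b+1) = W1f k s a b := by
  unfold W2f W1f
  by_cases h : a + b + 1 = s
  · rw [if_pos (by omega), if_pos (by omega), if_pos h]
    simp only [pow_succ]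
    push_cast
    ring
  · rw [if_neg (by omega), if_neg (by omega), if_neg h, add_zero]

lemma step10 (a b : ℕ) : W1f k s (a+1) b + W1f k s a (b+1) = W0f k s a b := by
  unfold W1f W0f
  by_cases h : a + b + 2 = s
  · rw [if_pos (by omega), if_pos (by omega), if_pos h]
    simp only [pow_succ]
    push_cast
    ring
  · rw [if_neg (by omega), if_neg (by omega), if_neg h, add_zero]

lemma step00 (a b : ℕ) : W0f k s (a+1) b + W0f k s a (b+1) = 0 := by
  unfold W0f
  by_cases h : a + b + 3 = s
  · rw [if_pos (by omega), if_pos (by omega)]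
    simp only [pow_succ]
    ring
  · rw [if_neg (by omega), if_neg (by omega), add_zero]

lemma W2_left (b : ℕ) : W2f k s s b = 0 := by
  unfold W2f
  split
  · rename_i h
    have : b = 0 := by omega
    subst this
    simp
  · rfl

lemma W2_right (a : ℕ) : W2f k s a s = 0 := by
  unfold W2f
  split
  · rename_i h
    have : a = 0 := by omega
    subst this
    simp
  · rfl

lemma W1_left (b : ℕ) : W1f k s s b = 0 := by
  unfold W1f; rw [if_neg (by omega)]
lemma W1_right (a : ℕ) : W1f k s a s = 0 := by
  unfold W1f; rw [if_neg (by omega)]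
lemma W0_left (b : ℕ) : W0f k s s b = 0 := by
  unfold W0f; rw [if_neg (by omega)]
lemma W0_right (a : ℕ) : W0f k s a s = 0 := by
  unfold W0f; rw [if_neg (by omega)]

lemma hyp01 (hs1 : 2 ≤ s) (a b : ℕ) (ha : a < s) (hb : b < s) :
    (if a = 0 then 0 else G0f k s (a - 1) b) + (if b = 0 then 0 else G0f k s a (b - 1))
      = G1f k s a b := by
  rcases a with _ | a
  · rcases b with _ | b
    · have hrhs : G1f k s 0 0 = 0 := by
        unfold G1f
        rw [if_neg (by omega : ¬(0 + 0 + 1 = s))]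
      rw [hrhs]
      norm_num
    · rw [if_pos rfl, if_neg (by omega : ¬(b + 1 = 0)), Nat.add_sub_cancel, zero_add]
      unfold G0f G1f
      by_cases h : b + 2 = s
      · rw [if_pos (by omega), if_pos (by omega)]
        simp only [pow_succ, pow_zero]
        push_cast
        ring
      · rw [if_neg (by omega), if_neg (by omega)]
  · rcases b with _ | b
    · rw [if_neg (by omega : ¬(a + 1 = 0)), if_pos rfl, Nat.add_sub_cancel, add_zero]
      unfold G0f G1f
      by_cases h : a + 2 = s
      · rw [if_pos (by omega), if_pos (by omega)]
        simp only [pow_succ]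
        push_cast
        ring
      · rw [if_neg (by omega), if_neg (by omega)]
    · rw [if_neg (by omega : ¬(a + 1 = 0)), if_neg (by omega : ¬(b + 1 = 0)),
        Nat.add_sub_cancel, Nat.add_sub_cancel]
      unfold G0f G1f
      by_cases h : a + b + 3 = s
      · rw [if_pos (by omega), if_pos (by omega), if_pos (by omega)]
        simp only [pow_succ]
        push_cast
        ring
      · rw [if_neg (by omega), if_neg (by omega), if_neg (by omega), add_zero]

lemma hyp12 (a b : ℕ) (ha : a < s) (hb : b < s) :
    (if a = 0 then 0 else G1f k s (a - 1) b) + (if b = 0 then 0 else G1f k s a (b - 1))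
      = G2f k s a b := by
  rcases a with _ | a
  · rcases b with _ | b
    · have hrhs : G2f k s 0 0 = 0 := by
        unfold G2f
        rw [if_neg (by omega : ¬(0 + 0 = s))]
      rw [hrhs]
      norm_num
    · rw [if_pos rfl, if_neg (by omega : ¬(b + 1 = 0)), Nat.add_sub_cancel, zero_add]
      unfold G1f G2f
      rw [if_neg (by omega), if_neg (by omega)]
  · rcases b with _ | b
    · rw [if_neg (by omega : ¬(a + 1 = 0)), if_pos rfl, Nat.add_sub_cancel, add_zero]
      unfold G1f G2f
      rw [if_neg (by omega), if_neg (by omega)]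
    · rw [if_neg (by omega : ¬(a + 1 = 0)), if_neg (by omega : ¬(b + 1 = 0)),
        Nat.add_sub_cancel, Nat.add_sub_cancel]
      unfold G1f G2f
      by_cases h : a + b + 2 = s
      · rw [if_pos (by omega), if_pos (by omega), if_pos (by omega)]
        simp only [pow_succ]
        push_cast
        ring
      · rw [if_neg (by omega), if_neg (by omega), if_neg (by omega), add_zero]

lemma hyp20 (a b : ℕ) (ha : a < s) (hb : b < s) :
    (if a = 0 then 0 else G2f k s (a - 1) b) + (if b = 0 then 0 else G2f k s a (b - 1))
      = (fun _ _ => (0 : k)) a b := by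
  show _ = (0 : k)
  rcases a with _ | a
  · rcases b with _ | b
    · norm_num
    · rw [if_pos rfl, if_neg (by omega : ¬(b + 1 = 0)), Nat.add_sub_cancel, zero_add]
      unfold G2f
      rw [if_neg (by omega)]
  · rcases b with _ | b
    · rw [if_neg (by omega : ¬(a + 1 = 0)), if_pos rfl, Nat.add_sub_cancel, add_zero]
      unfold G2f
      rw [if_neg (by omega)]
    · rw [if_neg (by omega : ¬(a + 1 = 0)), if_neg (by omega : ¬(b + 1 = 0)),
        Nat.add_sub_cancel, Nat.add_sub_cancel]
      unfold G2f
      by_cases h : a + b + 1 = s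
      · rw [if_pos (by omega), if_pos (by omega)]
        simp only [pow_succ]
        ring
      · rw [if_neg (by omega), if_neg (by omega), add_zero]

end Concrete

section Gram

variable {k : Type} [Field k] {s : ℕ}

lemma sum_cubic (n : ℕ) :
    6 * (∑ a ∈ Finset.range n, (a + 1) * (n - a)) = n * (n + 1) * (n + 2) := by
  induction n with
  | zero => simp
  | succ n ih =>
    have h5 : ∑ a ∈ Finset.range n, (a + 1) = ∑ i ∈ Finset.range (n + 1), i := by
      rw [Finset.sum_range_succ']
      rw [add_zero]
    have h4 : 2 * (∑ a ∈ Finset.range n, (a + 1)) = n * (n + 1) := by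
      rw [h5, mul_comm, Finset.sum_range_id_mul_two (n + 1)]
      simp [Nat.mul_comm]
    have h1 : ∑ a ∈ Finset.range (n + 1), (a + 1) * (n + 1 - a)
        = ((∑ a ∈ Finset.range n, (a + 1) * (n - a)) + (∑ a ∈ Finset.range n, (a + 1))) + (n + 1) := by
      rw [Finset.sum_range_succ]
      have h2 : n + 1 - n = 1 := by omega
      rw [h2, mul_one]
      congr 1
      rw [← Finset.sum_add_distrib]
      apply Finset.sum_congr rfl
      intro a ha
      have h3 : n + 1 - a = (n - a) + 1 := by
        have := Finset.mem_range.mp ha; omega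
      rw [h3, Nat.mul_succ]
    rw [h1]
    have hexp : 6 * (((∑ a ∈ Finset.range n, (a + 1) * (n - a))
          + (∑ a ∈ Finset.range n, (a + 1))) + (n + 1))
        = 6 * (∑ a ∈ Finset.range n, (a + 1) * (n - a))
          + 3 * (2 * (∑ a ∈ Finset.range n, (a + 1))) + 6 * (n + 1) := by ring
    rw [hexp, ih, h4]
    ring

lemma gram_c (hs1 : 2 ≤ s) :
    fF k s (G0f k s) (wh k s (W0f k s)) =
      2 * (-1 : k) ^ s * ((∑ a ∈ Finset.range (s - 1), (a + 1) * (s - 1 - a) : ℕ) : k) := by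
  rw [fF_wh]
  have hterm : ∀ a b : ℕ, W0f k s a b * G0f k s a b =
      if a + b + 2 = s then 2 * (-1 : k) ^ s * (((a + 1) : ℕ) : k) * (((b + 1) : ℕ) : k) else 0 := by
    intro a b
    unfold W0f G0f
    by_cases h : a + b + 2 = s
    · rw [if_pos h, if_pos h, if_pos h, ← h]
      simp only [pow_add, pow_succ, pow_zero]
      push_cast
      ring
    · rw [if_neg h, if_neg h, if_neg h, zero_mul]
  have hrw : ∑ a ∈ Finset.range s, ∑ b ∈ Finset.range s, W0f k s a b * G0f k s a b
      = ∑ a ∈ Finset.range s, (if a + 2 ≤ s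
          then 2 * (-1 : k) ^ s * (((a + 1) : ℕ) : k) * (((s - a - 2 + 1) : ℕ) : k) else 0) := by
    apply Finset.sum_congr rfl
    intro a _
    rw [Finset.sum_congr rfl (fun b _ => hterm a b)]
    by_cases h2 : a + 2 ≤ s
    · rw [if_pos h2, Finset.sum_eq_single (s - a - 2)]
      · rw [if_pos (by omega)]
      · intro b _ hb
        rw [if_neg (by omega)]
      · intro hmem
        exact absurd (Finset.mem_range.mpr (by omega)) hmem
    · rw [if_neg h2]
      apply Finset.sum_eq_zero
      intro b _
      rw [if_neg (by omega)]
  rw [hrw]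
  obtain ⟨m, rfl⟩ : ∃ m, s = m + 1 := ⟨s - 1, by omega⟩
  rw [Finset.sum_range_succ, if_neg (by omega), add_zero]
  have hra : ∀ a ∈ Finset.range m, (if a + 2 ≤ m + 1
        then 2 * (-1 : k) ^ (m+1) * (((a + 1) : ℕ) : k) * (((m + 1 - a - 2 + 1) : ℕ) : k) else 0)
      = 2 * (-1 : k) ^ (m+1) * ((((a + 1) * (m - a)) : ℕ) : k) := by
    intro a ha
    have hin := Finset.mem_range.mp ha
    rw [if_pos (by omega)]
    have h3 : m + 1 - a - 2 + 1 = m - a := by omega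
    rw [h3, Nat.cast_mul]
    ring
  rw [Finset.sum_congr rfl hra]
  have : ((m + 1 - 1) : ℕ) = m := by omega
  rw [this]
  rw [Nat.cast_sum, Finset.mul_sum]

end Gram

section FinalAux

variable {k : Type} [Field k] {s : ℕ}

lemma wh_zero : wh k s (fun _ _ => (0 : k)) = 0 := by
  unfold wh
  simp

lemma sigma3_c0 (v : Fin 3 → k) : sigmaL k 3 v 0 = v 0 + v 1 := by
  simp [sigmaL, jordanN, Matrix.mulVecLin_apply, Matrix.mulVec, dotProduct,
    Matrix.add_apply, Matrix.one_apply, Matrix.of_apply, Fin.sum_univ_three]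

lemma sigma3_c1 (v : Fin 3 → k) : sigmaL k 3 v 1 = v 1 + v 2 := by
  simp [sigmaL, jordanN, Matrix.mulVecLin_apply, Matrix.mulVec, dotProduct,
    Matrix.add_apply, Matrix.one_apply, Matrix.of_apply, Fin.sum_univ_three]

lemma sigma3_c2 (v : Fin 3 → k) : sigmaL k 3 v 2 = v 2 := by
  simp [sigmaL, jordanN, Matrix.mulVecLin_apply, Matrix.mulVec, dotProduct,
    Matrix.add_apply, Matrix.one_apply, Matrix.of_apply, Fin.sum_univ_three]

end FinalAux

end Stmt6

open Stmt6 in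
/-- Over an algebraically closed field of characteristic `p > 3`,
for every `2 ≤ s ≤ p − 2`, the representation `L_3` is a direct summand of `L_s ⊗ L_s`:
there is a `C_p`-equivariant split injection `L_3 → L_s ⊗ L_s` (equivalently,
`L_s ⊗ L_s ≅ L_3 ⊕ R` for some representation `R` of `C_p`). -/
theorem stmt6 (p : ℕ) (hp : p.Prime) (hp3 : 3 < p)
    (k : Type) [Field k] [IsAlgClosed k] [CharP k p]
    (s : ℕ) (hs1 : 2 ≤ s) (hs2 : s ≤ p - 2) :
    ∃ (ι : (Fin 3 → k) →ₗ[k] TensorProduct k (Fin s → k) (Fin s → k))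
      (π : TensorProduct k (Fin s → k) (Fin s → k) →ₗ[k] (Fin 3 → k)),
      π ∘ₗ ι = LinearMap.id ∧
      ι ∘ₗ sigmaL k 3 = (TensorProduct.map (sigmaL k s) (sigmaL k s)) ∘ₗ ι ∧
      π ∘ₗ (TensorProduct.map (sigmaL k s) (sigmaL k s)) = sigmaL k 3 ∘ₗ π := by
  classical
  have hs0 : 0 < s := by omega
  have hp2 := hp.two_le
  -- the scalar Gram constants
  set c : k := fF k s (G0f k s) (wh k s (W0f k s)) with hc_def
  set nu1 : k := fF k s (G0f k s) (wh k s (W1f k s)) with hnu1_def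
  set nu0 : k := fF k s (G0f k s) (wh k s (W2f k s)) with hnu0_def
  -- c is nonzero
  have hc_ne : c ≠ 0 := by
    intro h0
    have hcval := gram_c (k := k) hs1
    have h3 : (3 : k) * c =
        (-1 : k) ^ s * ((6 * ∑ a ∈ Finset.range (s - 1), (a + 1) * (s - 1 - a) : ℕ) : k) := by
      rw [← hc_def] at hcval
      rw [hcval]
      push_cast
      ring
    rw [h0, mul_zero] at h3
    have hne : (-1 : k) ^ s ≠ 0 := pow_ne_zero _ (by norm_num)
    have h4 : ((6 * ∑ a ∈ Finset.range (s - 1), (a + 1) * (s - 1 - a) : ℕ) : k) = 0 := by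
      rcases mul_eq_zero.mp h3.symm with h | h
      · exact absurd h hne
      · exact h
    rw [sum_cubic (s - 1)] at h4
    have h5 : (s - 1) * (s - 1 + 1) * (s - 1 + 2) = (s - 1) * s * (s + 1) := by
      have e1 : s - 1 + 1 = s := by omega
      have e2 : s - 1 + 2 = s + 1 := by omega
      rw [e1, e2]
    rw [h5] at h4
    have hdvd : p ∣ (s - 1) * s * (s + 1) := (CharP.cast_eq_zero_iff k p _).mp h4
    rcases (Nat.Prime.dvd_mul hp).mp hdvd with h | h
    · rcases (Nat.Prime.dvd_mul hp).mp h with h | h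
      · have := Nat.le_of_dvd (by omega) h; omega
      · have := Nat.le_of_dvd (by omega) h; omega
    · have := Nat.le_of_dvd (by omega) h; omega
  -- the chain vectors
  set w2 := psiMap k s (wh k s (W2f k s)) with hw2_def
  set w1 := psiMap k s (wh k s (W1f k s)) with hw1_def
  set w0 := psiMap k s (wh k s (W0f k s)) with hw0_def
  have hch2 : Tmap k s w2 = w2 + w1 := by
    rw [hw2_def, ← LinearMap.comp_apply, T_comp_psi, LinearMap.comp_apply,
      Uhat_wh hs0 _ _ W2_left W2_right step21, map_add]
  have hch1 : Tmap k s w1 = w1 + w0 := by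
    rw [hw1_def, ← LinearMap.comp_apply, T_comp_psi, LinearMap.comp_apply,
      Uhat_wh hs0 _ _ W1_left W1_right step10, map_add]
  have hch0 : Tmap k s w0 = w0 := by
    rw [hw0_def, ← LinearMap.comp_apply, T_comp_psi, LinearMap.comp_apply,
      Uhat_wh hs0 _ (fun _ _ => (0:k)) W0_left W0_right step00, wh_zero, add_zero]
  -- the functionals
  set F0 := fF k s (G0f k s) ∘ₗ psiInv k s with hF0_def
  set F1 := fF k s (G1f k s) ∘ₗ psiInv k s with hF1_def
  set F2 := fF k s (G2f k s) ∘ₗ psiInv k s with hF2_def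
  have hinvT : ∀ X, psiInv k s (Tmap k s X) = Uhat k s (psiInv k s X) := by
    intro X
    rw [← LinearMap.comp_apply, psiInv_comp_T, LinearMap.comp_apply]
  have hF0T : ∀ X, F0 (Tmap k s X) = F0 X + F1 X := by
    intro X
    rw [hF0_def, hF1_def]
    simp only [LinearMap.comp_apply]
    rw [hinvT]
    have h2 := LinearMap.congr_fun
      (fF_comp_Uhat hs0 (G0f k s) (G1f k s) (hyp01 hs1)) (psiInv k s X)
    simpa using h2
  have hF1T : ∀ X, F1 (Tmap k s X) = F1 X + F2 X := by
    intro X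
    rw [hF1_def, hF2_def]
    simp only [LinearMap.comp_apply]
    rw [hinvT]
    have h2 := LinearMap.congr_fun
      (fF_comp_Uhat hs0 (G1f k s) (G2f k s) hyp12) (psiInv k s X)
    simpa using h2
  have hF2T : ∀ X, F2 (Tmap k s X) = F2 X := by
    intro X
    rw [hF2_def]
    simp only [LinearMap.comp_apply]
    rw [hinvT]
    have h2 := LinearMap.congr_fun
      (fF_comp_Uhat hs0 (G2f k s) (fun _ _ => (0:k)) hyp20) (psiInv k s X)
    rw [fF_zero] at h2
    simpa using h2
  -- Gram entries
  have hinv : ∀ Y, psiInv k s (psiMap k s Y) = Y := by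
    intro Y
    rw [← LinearMap.comp_apply, psiInv_comp_psi, LinearMap.id_apply]
  have e00 : F0 w0 = c := by
    rw [hF0_def, hw0_def, LinearMap.comp_apply, hinv, hc_def]
  have e01 : F0 w1 = nu1 := by
    rw [hF0_def, hw1_def, LinearMap.comp_apply, hinv, hnu1_def]
  have e02 : F0 w2 = nu0 := by
    rw [hF0_def, hw2_def, LinearMap.comp_apply, hinv, hnu0_def]
  have e10 : F1 w0 = 0 := by
    have h := hF0T w0
    rw [hch0] at h
    exact (left_eq_add.mp h)
  have e20 : F2 w0 = 0 := by
    have h := hF1T w0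
    rw [hch0] at h
    exact (left_eq_add.mp h)
  have e11 : F1 w1 = c := by
    have h := hF0T w1
    rw [hch1, map_add, e00, e01] at h
    exact (add_left_cancel h).symm
  have e21 : F2 w1 = 0 := by
    have h := hF1T w1
    rw [hch1, map_add, e11, e10, add_zero] at h
    exact (left_eq_add.mp h)
  have e12 : F1 w2 = nu1 := by
    have h := hF0T w2
    rw [hch2, map_add, e01, e02] at h
    exact (add_left_cancel h).symm
  have e22 : F2 w2 = c := by
    have h := hF1T w2
    rw [hch2, map_add, e12, e11] at h
    exact (add_left_cancel h).symm
  -- corrected vectors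
  set al : k := c⁻¹ with hal
  set be : k := -(nu1 * c⁻¹ * c⁻¹) with hbe
  set ga : k := nu1 * nu1 * c⁻¹ * c⁻¹ * c⁻¹ - nu0 * c⁻¹ * c⁻¹ with hga
  set u0 := al • w0 with hu0_def
  set u1 := al • w1 + be • w0 with hu1_def
  set u2 := al • w2 + be • w1 + ga • w0 with hu2_def
  have hT0 : Tmap k s u0 = u0 := by
    rw [hu0_def, map_smul, hch0]
  have hT1 : Tmap k s u1 = u1 + u0 := by
    rw [hu1_def, hu0_def, map_add, map_smul, map_smul, hch1, hch0, smul_add]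
    abel
  have hT2 : Tmap k s u2 = u2 + u1 := by
    rw [hu2_def, hu1_def, map_add, map_add, map_smul, map_smul, map_smul,
      hch2, hch1, hch0, smul_add, smul_add]
    abel
  -- values of the functionals on corrected vectors
  have v00 : F0 u0 = 1 := by
    rw [hu0_def, map_smul, e00, hal, smul_eq_mul, inv_mul_cancel₀ hc_ne]
  have v01 : F0 u1 = 0 := by
    rw [hu1_def, map_add, map_smul, map_smul, e01, e00, hal, hbe, smul_eq_mul, smul_eq_mul]
    field_simp
    try ring
  have v02 : F0 u2 = 0 := by
    rw [hu2_def, map_add, map_add, map_smul, map_smul, map_smul, e02, e01, e00,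
      hal, hbe, hga, smul_eq_mul, smul_eq_mul, smul_eq_mul]
    field_simp
    try ring
  have v10 : F1 u0 = 0 := by
    rw [hu0_def, map_smul, e10, smul_eq_mul, mul_zero]
  have v11 : F1 u1 = 1 := by
    rw [hu1_def, map_add, map_smul, map_smul, e11, e10, hal, smul_eq_mul, smul_eq_mul,
      mul_zero, add_zero, inv_mul_cancel₀ hc_ne]
  have v12 : F1 u2 = 0 := by
    rw [hu2_def, map_add, map_add, map_smul, map_smul, map_smul, e12, e11, e10,
      hal, hbe, smul_eq_mul, smul_eq_mul, smul_eq_mul, mul_zero, add_zero]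
    field_simp
    try ring
  have v20 : F2 u0 = 0 := by
    rw [hu0_def, map_smul, e20, smul_eq_mul, mul_zero]
  have v21 : F2 u1 = 0 := by
    rw [hu1_def, map_add, map_smul, map_smul, e21, e20, smul_eq_mul, smul_eq_mul,
      mul_zero, mul_zero, add_zero]
  have v22 : F2 u2 = 1 := by
    rw [hu2_def, map_add, map_add, map_smul, map_smul, map_smul, e22, e21, e20,
      hal, smul_eq_mul, smul_eq_mul, smul_eq_mul, mul_zero, mul_zero, add_zero, add_zero,
      inv_mul_cancel₀ hc_ne]
  -- assemble the maps
  set iota : (Fin 3 → k) →ₗ[k] TensorProduct k (Fin s → k) (Fin s → k) :=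
    (LinearMap.proj (0 : Fin 3)).smulRight u0 + (LinearMap.proj (1 : Fin 3)).smulRight u1
      + (LinearMap.proj (2 : Fin 3)).smulRight u2 with hiota_def
  have hiota : ∀ v : Fin 3 → k, iota v = v 0 • u0 + v 1 • u1 + v 2 • u2 := by
    intro v
    rw [hiota_def]
    simp [LinearMap.add_apply, LinearMap.smulRight_apply, LinearMap.proj_apply]
  set piF : TensorProduct k (Fin s → k) (Fin s → k) →ₗ[k] (Fin 3 → k) :=
    LinearMap.pi (fun i => ![F0, F1, F2] i) with hpi_def
  have hpi0 : ∀ X, piF X 0 = F0 X := by intro X; rw [hpi_def]; rfl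
  have hpi1 : ∀ X, piF X 1 = F1 X := by intro X; rw [hpi_def]; rfl
  have hpi2 : ∀ X, piF X 2 = F2 X := by intro X; rw [hpi_def]; rfl
  have hTeq : TensorProduct.map (sigmaL k s) (sigmaL k s) = Tmap k s := rfl
  refine ⟨iota, piF, ?_, ?_, ?_⟩
  · apply LinearMap.ext
    intro v
    have h0 : piF (iota v) 0 = v 0 := by
      rw [hpi0, hiota]
      simp only [map_add, map_smul, v00, v01, v02, smul_eq_mul, mul_one, mul_zero,
        add_zero, zero_add]
    have h1 : piF (iota v) 1 = v 1 := by
      rw [hpi1, hiota]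
      simp only [map_add, map_smul, v10, v11, v12, smul_eq_mul, mul_one, mul_zero,
        add_zero, zero_add]
    have h2 : piF (iota v) 2 = v 2 := by
      rw [hpi2, hiota]
      simp only [map_add, map_smul, v20, v21, v22, smul_eq_mul, mul_one, mul_zero,
        add_zero, zero_add]
    funext i
    fin_cases i
    · exact h0
    · exact h1
    · exact h2
  · apply LinearMap.ext
    intro v
    have m0 : Tmap k s (v 0 • u0) = v 0 • u0 := by
      rw [LinearMap.map_smul, hT0]
    have m1 : Tmap k s (v 1 • u1) = v 1 • (u1 + u0) := by
      rw [LinearMap.map_smul, hT1]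
    have m2 : Tmap k s (v 2 • u2) = v 2 • (u2 + u1) := by
      rw [LinearMap.map_smul, hT2]
    rw [LinearMap.comp_apply, LinearMap.comp_apply, hTeq]
    rw [hiota, hiota, sigma3_c0, sigma3_c1, sigma3_c2]
    rw [map_add, map_add, m0, m1, m2]
    simp only [smul_add, add_smul]
    abel
  · apply LinearMap.ext
    intro X
    have q0 : piF (Tmap k s X) 0 = piF X 0 + piF X 1 := by
      rw [hpi0, hpi0, hpi1]
      exact hF0T X
    have q1 : piF (Tmap k s X) 1 = piF X 1 + piF X 2 := by
      rw [hpi1, hpi1, hpi2]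
      exact hF1T X
    have q2 : piF (Tmap k s X) 2 = piF X 2 := by
      rw [hpi2, hpi2]
      exact hF2T X
    have r0 : sigmaL k 3 (piF X) 0 = piF X 0 + piF X 1 := sigma3_c0 _
    have r1 : sigmaL k 3 (piF X) 1 = piF X 1 + piF X 2 := sigma3_c1 _
    have r2 : sigmaL k 3 (piF X) 2 = piF X 2 := sigma3_c2 _
    have goal0 : piF (Tmap k s X) 0 = sigmaL k 3 (piF X) 0 := by rw [q0, r0]
    have goal1 : piF (Tmap k s X) 1 = sigmaL k 3 (piF X) 1 := by rw [q1, r1]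
    have goal2 : piF (Tmap k s X) 2 = sigmaL k 3 (piF X) 2 := by rw [q2, r2]
    rw [LinearMap.comp_apply, LinearMap.comp_apply, hTeq]
    funext i
    fin_cases i
    · exact goal0
    · exact goal1
    · exact goal2
end

section
/- Let p be a prime and let r, s be integers with 1 ≤ r, s ≤ p−1. Set c = min(r, s, p−r, p−s). Then in the Verlinde ring ℤ[X]/(P_p) one has P_r·P_s ≡ Σ_{i=1}^{c} P_{|r−s|+2i−1} (mod P_p). -/
open Polynomial

/-- The Chebyshev-like polynomials `P_s ∈ ℤ[X]`: `P_0 = 0`, `P_1 = 1`,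
`P_{s+2} = X·P_{s+1} − P_s` (so that `P_s(2 cos θ) = sin(sθ)/sin θ`). The Verlinde ring
`K(Ver_p)` is `ℤ[X]/(P_p)`, where the class of `P_s` is the class `[L̄_s]`. -/
noncomputable def chebP : ℕ → Polynomial ℤ
  | 0 => 0
  | 1 => 1
  | n + 2 => X * chebP (n + 1) - chebP n

lemma chebP_add_two (n : ℕ) : chebP (n + 2) = X * chebP (n + 1) - chebP n := by
  rw [chebP]

/-- Fundamental multiplicative identity: `P_{a+1} P_{b+1} = P_a P_b + P_{a+b+1}`. -/
lemma chebA : ∀ a b : ℕ, chebP (a + 1) * chebP (b + 1) = chebP a * chebP b + chebP (a + b + 1) := by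
  have c0 : chebP 0 = 0 := by rw [chebP]
  have c1 : chebP 1 = 1 := by rw [chebP]
  intro a
  induction a using Nat.strong_induction_on with
  | _ a ih =>
    match a with
    | 0 =>
      intro b
      rw [show 0 + 1 = 1 by omega, show 0 + b + 1 = b + 1 by omega, c0, c1]
      ring
    | 1 =>
      intro b
      rw [show 1 + b + 1 = b + 2 by omega, chebP_add_two b,
        show (1 : ℕ) + 1 = 0 + 2 by omega, chebP_add_two 0, c0, c1]
      ring
    | (a + 2) =>
      intro b
      have h1 := ih (a + 1) (by omega) b
      have h2 := ih a (by omega) b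
      rw [show a + 1 + 1 = a + 2 by omega, show a + 1 + b + 1 = a + b + 2 by omega] at h1
      have e1 : chebP (a + 3) = X * chebP (a + 2) - chebP (a + 1) := by
        rw [show a + 3 = (a + 1) + 2 by omega, chebP_add_two, show a + 1 + 1 = a + 2 by omega]
      have e2 : chebP (a + 2) = X * chebP (a + 1) - chebP a := chebP_add_two a
      have e3 : chebP (a + b + 3) = X * chebP (a + b + 2) - chebP (a + b + 1) := by
        rw [show a + b + 3 = (a + b + 1) + 2 by omega, chebP_add_two,
          show a + b + 1 + 1 = a + b + 2 by omega]
      rw [show a + 2 + 1 = a + 3 by omega, show a + 2 + b + 1 = a + b + 3 by omega,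
        e1, e3, e2]
      rw [e2] at h1
      linear_combination X * h1 - h2

/-- Exact product formula: `P_m P_{m+k} = Σ_{i<m} P_{k+2i+1}`. -/
lemma chebProd (m k : ℕ) :
    chebP m * chebP (m + k) = ∑ i ∈ Finset.range m, chebP (k + 2 * i + 1) := by
  induction m with
  | zero => simp [chebP]
  | succ m ih =>
    have hA := chebA m (m + k)
    rw [Finset.sum_range_succ, ← ih]
    have e1 : m + 1 + k = m + k + 1 := by omega
    have e2 : m + (m + k) + 1 = k + 2 * m + 1 := by omega
    rw [e1, hA, e2]

/-- `P_{p-k} ≡ P_{p-1} P_k (mod P_p)` for `k ≤ p`. -/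
lemma chebB (p : ℕ) : ∀ k, k ≤ p → chebP p ∣ chebP (p - k) - chebP (p - 1) * chebP k := by
  intro k
  induction k using Nat.strong_induction_on with
  | _ k ih =>
    match k with
    | 0 => intro _; simp [chebP]
    | 1 => intro _; simp [chebP]
    | (k + 2) =>
      intro hk
      have h1 := ih (k + 1) (by omega) (by omega)
      have h2 := ih k (by omega) (by omega)
      have e1 : p - k = (p - (k + 2)) + 2 := by omega
      have e2 : p - (k + 1) = (p - (k + 2)) + 1 := by omega
      have hrec : chebP (p - k) = X * chebP (p - (k + 1)) - chebP (p - (k + 2)) := by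
        rw [e1, e2, chebP_add_two]
      have hrec2 : chebP (k + 2) = X * chebP (k + 1) - chebP k := chebP_add_two k
      have hdvd := dvd_sub (Dvd.dvd.mul_left h1 X) h2
      have key : chebP (p - (k + 2)) - chebP (p - 1) * chebP (k + 2)
          = X * (chebP (p - (k + 1)) - chebP (p - 1) * chebP (k + 1))
            - (chebP (p - k) - chebP (p - 1) * chebP k) := by
        rw [hrec, hrec2]; ring
      rw [key]; exact hdvd

/-- Reflection: `P_{p+k} + P_{p-k} ≡ 0 (mod P_p)` for `k ≤ p`. -/
lemma chebRefl (p k : ℕ) (hp : 1 ≤ p) (hk : k ≤ p) :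
    chebP p ∣ chebP (p + k) + chebP (p - k) := by
  have hA := chebA k (p - 1)
  have e : p - 1 + 1 = p := by omega
  have e2 : k + (p - 1) + 1 = p + k := by omega
  rw [e, e2] at hA
  have h1 : chebP p ∣ chebP (p + k) + chebP k * chebP (p - 1) :=
    ⟨chebP (k + 1), by linear_combination -hA⟩
  have h2 := chebB p k hk
  have goal_eq : chebP (p + k) + chebP (p - k)
      = (chebP (p + k) + chebP k * chebP (p - 1))
        + (chebP (p - k) - chebP (p - 1) * chebP k) := by ring
  rw [goal_eq]
  exact dvd_add h1 h2

/-- A block of terms symmetric about `p` sums to a multiple of `P_p`. -/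
lemma chebSym (p : ℕ) (hp : 1 ≤ p) :
    ∀ m, m ≤ p → chebP p ∣ ∑ i ∈ Finset.range m, chebP (p - m + 1 + 2 * i) := by
  intro m
  induction m using Nat.strong_induction_on with
  | _ m ih =>
    match m with
    | 0 => intro _; simp
    | 1 =>
      intro _
      rw [Finset.sum_range_one, show p - 1 + 1 + 2 * 0 = p by omega]
    | (m + 2) =>
      intro hm
      rw [Finset.sum_range_succ', Finset.sum_range_succ]
      have key : ∑ i ∈ Finset.range m, chebP (p - (m + 2) + 1 + 2 * (i + 1))
          = ∑ i ∈ Finset.range m, chebP (p - m + 1 + 2 * i) :=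
        Finset.sum_congr rfl fun i _ => by congr 1; omega
      rw [key, show p - (m + 2) + 1 + 2 * (m + 1) = p + (m + 1) by omega,
        show p - (m + 2) + 1 + 2 * 0 = p - (m + 1) by omega, add_assoc]
      exact dvd_add (ih m (by omega) (by omega)) (chebRefl p (m + 1) hp (by omega))

theorem stmt10_aux (p r s d c : ℕ) (hp : 2 ≤ p) (hrs : r ≤ s) (hr1 : 1 ≤ r) (hs2 : s ≤ p - 1)
    (hd : d = s - r) (hc : c = min r (p - s)) :
    chebP p ∣ chebP r * chebP s - ∑ i ∈ Finset.range c, chebP (d + 2 * i + 1) := by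
  have hsp : s < p := by omega
  have hprod : chebP r * chebP s = ∑ i ∈ Finset.range r, chebP (d + 2 * i + 1) := by
    have h := chebProd r d
    rwa [show r + d = s by omega] at h
  rcases le_or_gt r (p - s) with h | h
  · rw [hprod, show c = r by omega, sub_self]
    exact dvd_zero _
  · have hcps : c = p - s := by omega
    have hr : r = c + (r - c) := by omega
    rw [hprod, hr, Finset.sum_range_add, add_sub_cancel_left]
    have key : ∑ i ∈ Finset.range (r - c), chebP (d + 2 * (c + i) + 1)
        = ∑ i ∈ Finset.range (r - c), chebP (p - (r - c) + 1 + 2 * i) :=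
      Finset.sum_congr rfl fun i _ => by congr 1; omega
    rw [key]
    exact chebSym p (by omega) (r - c) (by omega)

/-- Let `p` be a prime and `1 ≤ r, s ≤ p − 1`; set
`c = min(r, s, p−r, p−s)` and `d = |r − s|`. Then in the Verlinde ring `ℤ[X]/(P_p)`
one has `P_r · P_s ≡ Σ_{i=1}^{c} P_{|r−s|+2i−1} (mod P_p)` (the `i`-th term below,
`0 ≤ i < c`, is `P_{d+2i+1} = P_{|r−s|+2(i+1)−1}`). -/
theorem stmt10 (p : ℕ) (hp : p.Prime) (r s : ℕ)
    (hr1 : 1 ≤ r) (hr2 : r ≤ p - 1) (hs1 : 1 ≤ s) (hs2 : s ≤ p - 1)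
    (d c : ℕ) (hd : d = max r s - min r s)
    (hc : c = min (min r s) (min (p - r) (p - s))) :
    chebP p ∣ chebP r * chebP s - ∑ i ∈ Finset.range c, chebP (d + 2 * i + 1) := by
  have hp2 : 2 ≤ p := hp.two_le
  rcases le_total r s with h | h
  · exact stmt10_aux p r s d c hp2 h hr1 hs2 (by omega) (by omega)
  · have := stmt10_aux p s r d c hp2 h hs1 hr2 (by omega) (by omega)
    rwa [mul_comm] at this
end

section
/- Let p be an odd prime. In the ring (ℤ/pℤ)[X]/(P_p) (the Verlinde ring K(Ver_p) reduced modulo p), one has X^p ≡ −2·P_{p−1} (mod P_p). In other words, in ℤ[X] the polynomial X^p + 2·P_{p−1} lies in the ideal generated by p and P_p. -/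
open Polynomial

/-- The first-kind Dickson polynomial in terms of `chebP`. -/
lemma dickson_eq_chebP : ∀ n : ℕ,
    Polynomial.dickson 1 (1 : ℤ) (n + 1) = X * chebP (n + 1) - 2 * chebP n
  | 0 => by simp [Polynomial.dickson_one, chebP]
  | 1 => by
      rw [Polynomial.dickson_two, show chebP 2 = X * chebP 1 - chebP 0 from rfl]
      simp only [chebP, map_one]
      ring
  | (n + 2) => by
      rw [Polynomial.dickson_add_two, dickson_eq_chebP (n + 1), dickson_eq_chebP n,
        show chebP (n + 3) = X * chebP (n + 2) - chebP (n + 1) from rfl,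
        show chebP (n + 2) = X * chebP (n + 1) - chebP n from rfl]
      simp only [map_one]
      ring

/-- Let `p` be an odd prime. In `(ℤ/pℤ)[X]/(P_p)` one has
`X^p ≡ −2·P_{p−1} (mod P_p)`, i.e. `P̄_p ∣ X^p + 2·P̄_{p−1}` in `(ℤ/pℤ)[X]`.
In other words, in `ℤ[X]` the polynomial `X^p + 2·P_{p−1}` lies in the ideal
generated by `p` and `P_p`. -/
theorem stmt11 (p : ℕ) (hp : p.Prime) (hodd : Odd p) :
    ((chebP p).map (Int.castRingHom (ZMod p)) ∣
      (X : Polynomial (ZMod p)) ^ p + 2 * (chebP (p - 1)).map (Int.castRingHom (ZMod p)))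
    ∧ (X : Polynomial ℤ) ^ p + 2 * chebP (p - 1) ∈
        Ideal.span ({C (p : ℤ), chebP p} : Set (Polynomial ℤ)) := by
  haveI : Fact p.Prime := ⟨hp⟩
  obtain ⟨q, hq⟩ : ∃ q, p = q + 1 := ⟨p - 1, (Nat.succ_pred_eq_of_pos hp.pos).symm⟩
  have hq' : p - 1 = q := by omega
  -- the key identity over ℤ : D_p = X * P_p - 2 * P_{p-1}
  have hD : Polynomial.dickson 1 (1 : ℤ) p = X * chebP p - 2 * chebP (p - 1) := by
    rw [hq', hq]; exact dickson_eq_chebP q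
  -- map it to ZMod p and use D_p = X^p in characteristic p
  set f := Int.castRingHom (ZMod p)
  have hmap : (X : Polynomial (ZMod p)) ^ p
      = X * (chebP p).map f - 2 * (chebP (p - 1)).map f := by
    rw [← Polynomial.dickson_one_one_charP (R := ZMod p) p,
      ← map_one f, ← Polynomial.map_dickson f, hD]
    push_cast [Polynomial.map_sub, Polynomial.map_mul, Polynomial.map_ofNat]
    simp
  constructor
  · refine ⟨X, ?_⟩
    rw [hmap]; ring
  · -- the difference X^p + 2 P_{p-1} - X * P_p has all coefficients divisible by p
    have hdvd : C ((p : ℤ)) ∣ ((X : Polynomial ℤ) ^ p + 2 * chebP (p - 1) - X * chebP p) := by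
      rw [Polynomial.C_dvd_iff_dvd_coeff]
      intro i
      have h0 : (((X : Polynomial ℤ) ^ p + 2 * chebP (p - 1) - X * chebP p).map f) = 0 := by
        push_cast [Polynomial.map_sub, Polynomial.map_add, Polynomial.map_mul,
          Polynomial.map_pow, Polynomial.map_X, Polynomial.map_ofNat]
        rw [hmap]; ring
      have := congrArg (fun g => Polynomial.coeff g i) h0
      simp only [Polynomial.coeff_map, Polynomial.coeff_zero] at this
      exact_mod_cast (ZMod.intCast_zmod_eq_zero_iff_dvd _ p).mp this
    obtain ⟨g, hg⟩ := hdvd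
    rw [Ideal.mem_span_pair]
    exact ⟨g, X, by linear_combination -hg⟩
end

section
/- Let p be a prime and let k be a field of characteristic p. Let V and W be finite-dimensional vector spaces over k, let f, g : V → W be linear maps, and let u : W^{⊗p} → V^{⊗p} be a linear map satisfying u ∘ σ_W = σ_V ∘ u, where σ_V and σ_W are the cyclic permutation operators on the p-fold tensor powers. Then trace(((f+g)^{⊗p}) ∘ u) = trace((f^{⊗p}) ∘ u) + trace((g^{⊗p}) ∘ u), where each trace is the trace of an endomorphism of W^{⊗p}. (This is the key computation showing that the Frobenius functor Fr_0 is additive: the difference (f+g)^{⊗p} − f^{⊗p} − g^{⊗p} is a negligible morphism in the C_p-equivariantization.) -/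
open Function
open Fin.CommRing

private lemma fix_of_iterate {X : Type} {p : ℕ} (hp : p.Prime) (φ : X → X) {y : X}
    (hyp : φ^[p] y = y) {m : ℕ} (hm : 0 < m) (hmp : m < p) (hy : φ^[m] y = y) : φ y = y := by
  have hcop : Nat.Coprime m p := Nat.coprime_comm.mp <|
    (Nat.Prime.coprime_iff_not_dvd hp).mpr (Nat.not_dvd_of_pos_of_lt hm hmp)
  obtain ⟨u, -, hu⟩ := Nat.exists_mul_mod_eq_one_of_coprime hcop hp.one_lt
  set q := m * u / p with hq
  have h1 : φ^[m * u] y = y := by rw [Function.iterate_mul]; exact Function.iterate_fixed hy u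
  have h2 : φ^[p * q] y = y := by rw [Function.iterate_mul]; exact Function.iterate_fixed hyp q
  have h3 : 1 + p * q = m * u := by
    have h4 : p * q + m * u % p = m * u := by rw [hq]; exact Nat.div_add_mod (m * u) p
    omega
  calc φ y = φ^[1] (φ^[p * q] y) := by rw [h2]; rfl
    _ = φ^[1 + p * q] y := (Function.iterate_add_apply φ 1 (p * q) y).symm
    _ = y := by rw [h3, h1]

private lemma orbit_sum_zero {k X : Type} [Field k] {p : ℕ} (hp : p.Prime) [CharP k p]
    [DecidableEq X] (φ : X → X) (hinj : Function.Injective φ) (v : X → k)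
    (hv : ∀ x, v (φ x) = v x) (s : Finset X) :
    (∀ x ∈ s, φ x ∈ s) → (∀ x ∈ s, φ^[p] x = x) → (∀ x ∈ s, φ x ≠ x) →
      ∑ x ∈ s, v x = 0 := by
  induction s using Finset.strongInduction with
  | _ s ih =>
    intro hc hper hnf
    rcases s.eq_empty_or_nonempty with rfl | ⟨x, hx⟩
    · simp
    · -- all iterates of x remain in s
      have hiter : ∀ j : ℕ, φ^[j] x ∈ s := by
        intro j
        induction j with
        | zero => exact hx
        | succ n ihn => rw [Function.iterate_succ_apply']; exact hc _ ihn
      -- v is constant on the orbit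
      have hvj : ∀ j : ℕ, v (φ^[j] x) = v x := by
        intro j
        induction j with
        | zero => rfl
        | succ n ihn => rw [Function.iterate_succ_apply', hv]; exact ihn
      -- injectivity of j ↦ φ^[j] x on range p
      have key : ∀ a b : ℕ, a ≤ b → b < p → φ^[a] x = φ^[b] x → a = b := by
        intro a b hab hbp he
        by_contra hne
        have hba : 0 < b - a := by omega
        have hy : φ^[b - a] (φ^[a] x) = φ^[a] x := by
          have : φ^[b - a] (φ^[a] x) = φ^[b] x := by
            rw [← Function.iterate_add_apply]
            congr 1
            omega
          rw [this, he]
        have := fix_of_iterate hp φ (hper _ (hiter a)) hba (by omega) hy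
        exact hnf _ (hiter a) this
      have hinjOn : ∀ a ∈ Finset.range p, ∀ b ∈ Finset.range p,
          φ^[a] x = φ^[b] x → a = b := by
        intro a ha b hb he
        simp only [Finset.mem_range] at ha hb
        rcases le_total a b with h | h
        · exact key a b h hb he
        · exact (key b a h ha he.symm).symm
      set O : Finset X := (Finset.range p).image fun j => φ^[j] x with hO
      have hOs : O ⊆ s := by
        intro y hy
        simp only [hO, Finset.mem_image] at hy
        obtain ⟨j, _, rfl⟩ := hy
        exact hiter j
      have hxO : x ∈ O := by
        simp only [hO, Finset.mem_image]
        exact ⟨0, Finset.mem_range.mpr hp.pos, rfl⟩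
      have hsumO : ∑ y ∈ O, v y = 0 := by
        rw [hO, Finset.sum_image hinjOn]
        have : ∑ j ∈ Finset.range p, v (φ^[j] x) = ∑ _j ∈ Finset.range p, v x :=
          Finset.sum_congr rfl fun j _ => hvj j
        rw [this, Finset.sum_const, Finset.card_range, nsmul_eq_mul,
          CharP.cast_eq_zero k p, zero_mul]
      -- O is stable under φ
      have hOφ : ∀ z ∈ O, φ z ∈ O := by
        intro z hz
        simp only [hO, Finset.mem_image] at hz ⊢
        obtain ⟨j, hj, rfl⟩ := hz
        simp only [Finset.mem_range] at hj
        rcases Nat.lt_or_ge (j + 1) p with h | h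
        · exact ⟨j + 1, Finset.mem_range.mpr h, Function.iterate_succ_apply' φ j x⟩
        · have hjp : j + 1 = p := by omega
          refine ⟨0, Finset.mem_range.mpr hp.pos, ?_⟩
          rw [← Function.iterate_succ_apply' φ j x]
          simp only [Nat.succ_eq_add_one, hjp, hper x hx]
          rfl
      have himg : O.image φ = O := by
        apply Finset.eq_of_subset_of_card_le
        · intro y hy
          simp only [Finset.mem_image] at hy
          obtain ⟨z, hz, rfl⟩ := hy
          exact hOφ z hz
        · rw [Finset.card_image_of_injective _ hinj]
      have hmemO : ∀ y, φ y ∈ O → y ∈ O := by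
        intro y hy
        rw [← himg, Finset.mem_image] at hy
        obtain ⟨z, hz, hzy⟩ := hy
        rwa [← hinj hzy]
      -- split the sum
      rw [← Finset.sum_sdiff hOs, hsumO, add_zero]
      apply ih
      · exact Finset.sdiff_ssubset hOs ⟨x, hxO⟩
      · intro y hy
        rw [Finset.mem_sdiff] at hy ⊢
        exact ⟨hc y hy.1, fun h => hy.2 (hmemO y h)⟩
      · intro y hy
        exact hper y (Finset.mem_sdiff.mp hy).1
      · intro y hy
        exact hnf y (Finset.mem_sdiff.mp hy).1

private lemma rot_iter (n m : ℕ) (i : Fin (n + 1)) :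
    (finRotate (n + 1))^[m] i = i + (m : Fin (n + 1)) := by
  induction m with
  | zero => simp
  | succ j ihj =>
    rw [Function.iterate_succ_apply', ihj, finRotate_succ_apply]
    push_cast
    ring

private lemma rot_p (n : ℕ) (i : Fin (n + 1)) : (finRotate (n + 1))^[n + 1] i = i := by
  rw [rot_iter, Fin.natCast_self, add_zero]

/-- The cyclic permutation operator `σ_V` on the `p`-fold tensor power `V^{⊗p}`, sending
`v_1 ⊗ v_2 ⊗ ⋯ ⊗ v_p` to `v_2 ⊗ v_3 ⊗ ⋯ ⊗ v_p ⊗ v_1`. -/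
noncomputable def cyc (k : Type) [Field k] (p : ℕ) (V : Type) [AddCommGroup V] [Module k V] :
    PiTensorProduct k (fun _ : Fin p => V) →ₗ[k] PiTensorProduct k (fun _ : Fin p => V) :=
  (PiTensorProduct.reindex k (fun _ : Fin p => V) (finRotate p).symm).toLinearMap

/-- Let `k` be a field of characteristic `p` (`p` prime), `V`, `W`
finite-dimensional over `k`, `f, g : V → W` linear, and `u : W^{⊗p} → V^{⊗p}` linear with
`u ∘ σ_W = σ_V ∘ u`. Then
`tr((f+g)^{⊗p} ∘ u) = tr(f^{⊗p} ∘ u) + tr(g^{⊗p} ∘ u)`. -/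
theorem stmt13 (p : ℕ) (hp : p.Prime) (k : Type) [Field k] [CharP k p]
    (V W : Type) [AddCommGroup V] [Module k V] [FiniteDimensional k V]
    [AddCommGroup W] [Module k W] [FiniteDimensional k W]
    (f g : V →ₗ[k] W)
    (u : PiTensorProduct k (fun _ : Fin p => W) →ₗ[k] PiTensorProduct k (fun _ : Fin p => V))
    (hu : u ∘ₗ cyc k p W = cyc k p V ∘ₗ u) :
    LinearMap.trace k (PiTensorProduct k (fun _ : Fin p => W))
        ((PiTensorProduct.map fun _ : Fin p => f + g) ∘ₗ u) =
      LinearMap.trace k (PiTensorProduct k (fun _ : Fin p => W))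
          ((PiTensorProduct.map fun _ : Fin p => f) ∘ₗ u) +
        LinearMap.trace k (PiTensorProduct k (fun _ : Fin p => W))
          ((PiTensorProduct.map fun _ : Fin p => g) ∘ₗ u) := by
  classical
  -- The trace functional as a multilinear map in the p-tuple of linear maps
  set T : MultilinearMap k (fun _ : Fin p => V →ₗ[k] W) k :=
    ((LinearMap.trace k (PiTensorProduct k (fun _ : Fin p => W))).comp
        (LinearMap.lcomp k (PiTensorProduct k (fun _ : Fin p => W)) u)).compMultilinearMap
      (PiTensorProduct.mapMultilinear k (fun _ : Fin p => V) (fun _ : Fin p => W)) with hT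
  have hTapp : ∀ h : Fin p → (V →ₗ[k] W),
      T h = LinearMap.trace k (PiTensorProduct k (fun _ : Fin p => W))
        ((PiTensorProduct.map h) ∘ₗ u) := fun h => rfl
  -- invariance of T under the cyclic rotation
  have hTrot : ∀ h : Fin p → (V →ₗ[k] W), T (fun i => h (finRotate p i)) = T h := by
    intro h
    rw [hTapp, hTapp]
    set eW := PiTensorProduct.reindex k (fun _ : Fin p => W) (finRotate p).symm with heW
    set eV := PiTensorProduct.reindex k (fun _ : Fin p => V) (finRotate p).symm with heV
    have hnat : ∀ x, (PiTensorProduct.map (fun i => h (finRotate p i))) (eV x) =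
        eW (PiTensorProduct.map h x) := by
      intro x
      have := PiTensorProduct.map_reindex (R := k) h ((finRotate p).symm) x
      simpa using this
    have hu' : ∀ x, u (eW.symm x) = eV.symm (u x) := by
      intro x
      have h1 := LinearMap.congr_fun hu (eW.symm x)
      simp only [cyc, LinearMap.coe_comp, Function.comp_apply, LinearEquiv.coe_coe,
        ← heW, ← heV, LinearEquiv.apply_symm_apply] at h1
      rw [h1, LinearEquiv.symm_apply_apply]
    have hconj : (PiTensorProduct.map fun i => h (finRotate p i)) ∘ₗ u =
        eW.conj ((PiTensorProduct.map h) ∘ₗ u) := by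
      apply LinearMap.ext
      intro x
      simp only [LinearMap.coe_comp, Function.comp_apply, LinearEquiv.conj_apply,
        LinearEquiv.coe_coe, LinearMap.coe_comp]
      rw [hu', ← hnat, LinearEquiv.apply_symm_apply]
    rw [hconj, LinearMap.trace_conj']
  -- expand by multilinearity
  have hadd : (fun _ : Fin p => f + g) =
      (fun _ : Fin p => f) + (fun _ : Fin p => g) := rfl
  rw [← hTapp, ← hTapp, ← hTapp, hadd, MultilinearMap.map_add_univ]
  -- separate the two pure terms
  have hne : (Finset.univ : Finset (Fin p)) ≠ (∅ : Finset (Fin p)) := by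
    have : Nonempty (Fin p) := ⟨⟨0, hp.pos⟩⟩
    exact Finset.univ_nonempty.ne_empty
  set v : Finset (Fin p) → k :=
    fun S => T (S.piecewise (fun _ => f) (fun _ => g)) with hv
  have h1 : (Finset.univ : Finset (Fin p)) ∈ (Finset.univ : Finset (Finset (Fin p))) :=
    Finset.mem_univ _
  have h2 : (∅ : Finset (Fin p)) ∈
      (Finset.univ : Finset (Finset (Fin p))).erase Finset.univ :=
    Finset.mem_erase.mpr ⟨fun h => hne h.symm, Finset.mem_univ _⟩
  rw [← Finset.add_sum_erase _ v h1, ← Finset.add_sum_erase _ v h2]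
  have hvuniv : v Finset.univ = T (fun _ => f) := by
    simp [hv, Finset.piecewise_univ]
  have hvempty : v ∅ = T (fun _ => g) := by
    simp [hv, Finset.piecewise_empty]
  rw [hvuniv, hvempty]
  -- the cyclic shift on subsets
  set φ : Finset (Fin p) → Finset (Fin p) :=
    fun S => S.map (finRotate p).symm.toEmbedding with hφ
  have hφinj : Function.Injective φ := Finset.map_injective _
  have hφmem : ∀ (S : Finset (Fin p)) (i : Fin p), i ∈ φ S ↔ finRotate p i ∈ S := by
    intro S i
    simp [hφ, Finset.mem_map_equiv]
  have hφiter : ∀ (m : ℕ) (S : Finset (Fin p)) (i : Fin p),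
      i ∈ φ^[m] S ↔ (finRotate p)^[m] i ∈ S := by
    intro m
    induction m with
    | zero => intro S i; rfl
    | succ j ihj =>
      intro S i
      rw [Function.iterate_succ_apply', hφmem, ihj, ← Function.iterate_succ_apply]
  have hrotp : ∀ i : Fin p, (finRotate p)^[p] i = i := by
    obtain ⟨n, rfl⟩ := Nat.exists_eq_succ_of_ne_zero hp.pos.ne'
    exact rot_p n
  have hfix : ∀ S : Finset (Fin p), (∀ i, finRotate p i ∈ S ↔ i ∈ S) → S.Nonempty →
      S = Finset.univ := by
    obtain ⟨n, rfl⟩ := Nat.exists_eq_succ_of_ne_zero hp.pos.ne'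
    rintro S hS ⟨i₀, hi₀⟩
    apply Finset.eq_univ_iff_forall.mpr
    intro j
    have hstep : ∀ m : ℕ, i₀ + (m : Fin (n + 1)) ∈ S := by
      intro m
      induction m with
      | zero => simpa using hi₀
      | succ l ihl =>
        have h2 : i₀ + (l : Fin (n + 1)) + 1 ∈ S := by
          rw [← finRotate_succ_apply]
          exact (hS _).mpr ihl
        have hc : ((l + 1 : ℕ) : Fin (n + 1)) = (l : Fin (n + 1)) + 1 := by
          push_cast; ring
        rw [hc, ← add_assoc]
        exact h2
    have := hstep (j - i₀).val
    rwa [Fin.cast_val_eq_self, add_comm, sub_add_cancel] at this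
  have hzero : ∑ S ∈ (((Finset.univ : Finset (Finset (Fin p))).erase
      Finset.univ).erase ∅), v S = 0 := by
    apply orbit_sum_zero hp φ hφinj v
    · -- invariance of v
      intro S
      show T ((φ S).piecewise (fun _ => f) (fun _ => g)) =
        T (S.piecewise (fun _ => f) (fun _ => g))
      have hpw : (φ S).piecewise (fun _ : Fin p => f) (fun _ => g) =
          fun i => (S.piecewise (fun _ : Fin p => f) (fun _ => g)) (finRotate p i) := by
        funext i
        simp only [Finset.piecewise]
        rw [if_congr (hφmem S i) rfl rfl]
      rw [hpw]
      exact hTrot _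

    · -- closure
      intro S hS
      rw [Finset.mem_erase, Finset.mem_erase] at hS ⊢
      obtain ⟨hS1, hS2, -⟩ := hS
      refine ⟨?_, ?_, Finset.mem_univ _⟩
      · intro hc
        simp only [hφ] at hc
        rw [Finset.map_eq_empty] at hc
        exact hS1 hc
      · intro hc
        apply hS2
        apply Finset.eq_univ_iff_forall.mpr
        intro j
        have hj : (finRotate p).symm j ∈ φ S := by rw [hc]; exact Finset.mem_univ _
        rw [hφmem] at hj
        simpa only [Equiv.apply_symm_apply] using hj
    · -- periodicity
      intro S _
      ext i
      rw [hφiter, hrotp]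
    · -- no fixed points
      intro S hS hc
      rw [Finset.mem_erase, Finset.mem_erase] at hS
      obtain ⟨hS1, hS2, -⟩ := hS
      apply hS2
      apply hfix
      · intro i
        rw [← hφmem, hc]
      · exact Finset.nonempty_iff_ne_empty.mpr hS1
  rw [hzero, add_zero]
end
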